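/- arXiv:2411.09257 — 5 statements merged into one kernel-verified Lean document; each statement's English description precedes it below -/
import Mathlib

section
/- For all t ≥ 0 and all real u with |u| ≤ 1, the probability generating function of the IGCP satisfies Σ_{n=0}^∞ u^n p̂(n,t) = exp(−Σ_{j₀=1}^{k₀} μ_{j₀} t (1 − exp(−j₀ Σ_{j=1}^k λ_j (1 − u^j)))). -/
/-- State probabilities of a generalized counting process (GCP) with `k` kinds of jumps of
amplitudes `1, …, k` and rates `lam 0, …, lam (k-1)` (index `j : Fin k` encodes jump size `j+1`):
`p(n,t) = ∑_{Ω(k,n)} ∏_j ((λ_j t)^{x_j}/x_j!) e^{−λ_j t}`. -/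
noncomputable def gcpPmf (k : ℕ) (lam : Fin k → ℝ) (n : ℕ) (t : ℝ) : ℝ :=
  ∑' x : Fin k → ℕ,
    if (∑ j : Fin k, ((j : ℕ) + 1) * x j) = n then
      ∏ j : Fin k, (lam j * t) ^ (x j) / (Nat.factorial (x j)) * Real.exp (-(lam j * t))
    else 0

/-- State probabilities of the iterated generalized counting process (IGCP):
`p̂(n,t) = ∑_{s=0}^∞ p(n,s) p₀(s,t)`. -/
noncomputable def igcpPmf (k : ℕ) (lam : Fin k → ℝ) (k0 : ℕ) (mu : Fin k0 → ℝ)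
    (n : ℕ) (t : ℝ) : ℝ :=
  ∑' s : ℕ, gcpPmf k lam n s * gcpPmf k0 mu s t

lemma exp_tsum_aux (c : ℝ) : ∑' m : ℕ, c ^ m / (Nat.factorial m) = Real.exp c := by
  rw [Real.exp_eq_exp_ℝ, NormedSpace.exp_eq_tsum_div]

lemma summable_norm_g (c d : ℝ) :
    Summable fun m : ℕ => ‖c ^ m / (Nat.factorial m) * d‖ := by
  have h := (Real.summable_pow_div_factorial |c|).mul_right |d|
  refine h.congr fun m => ?_
  rw [Real.norm_eq_abs, abs_mul, abs_div, abs_pow, Nat.abs_cast]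
lemma pi_tsum_prod : ∀ (k : ℕ) (g : Fin k → ℕ → ℝ),
    (∀ j, Summable fun m => ‖g j m‖) →
    (Summable fun x : Fin k → ℕ => ‖∏ j, g j (x j)‖) ∧
      ∑' x : Fin k → ℕ, ∏ j, g j (x j) = ∏ j, ∑' m, g j m := by
  intro k
  induction k with
  | zero =>
    intro g _
    haveI : Unique (Fin 0 → ℕ) :=
      ⟨⟨fun i => i.elim0⟩, fun f => funext fun i => i.elim0⟩
    constructor
    · exact Summable.of_finite
    · simp
  | succ k ih =>
    intro g hg
    obtain ⟨hs, he⟩ := ih (fun j m => g j.succ m) (fun j => hg j.succ)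
    let e : (ℕ × (Fin k → ℕ)) ≃ (Fin (k + 1) → ℕ) := Fin.consEquiv (fun _ => ℕ)
    have key : ∀ p : ℕ × (Fin k → ℕ),
        ∏ j : Fin (k + 1), g j (e p j) = g 0 p.1 * ∏ j : Fin k, g j.succ (p.2 j) := by
      intro p
      have hep : (e p : Fin (k + 1) → ℕ) = Fin.cons p.1 p.2 := rfl
      rw [hep, Fin.prod_univ_succ, Fin.cons_zero]
      congr 1
    have hmulnorm : Summable fun p : ℕ × (Fin k → ℕ) =>
        ‖g 0 p.1 * ∏ j : Fin k, g j.succ (p.2 j)‖ := Summable.mul_norm (f := g 0)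
          (g := fun y : Fin k → ℕ => ∏ j : Fin k, g j.succ (y j)) (hg 0) hs
    have hnorm : Summable fun x : Fin (k + 1) → ℕ => ‖∏ j, g j (x j)‖ := by
      rw [← e.summable_iff]
      refine hmulnorm.congr fun p => ?_
      simp only [Function.comp_apply]
      rw [key p]
    refine ⟨hnorm, ?_⟩
    rw [← e.tsum_eq]
    calc ∑' p : ℕ × (Fin k → ℕ), ∏ j : Fin (k + 1), g j (e p j)
        = ∑' p : ℕ × (Fin k → ℕ), g 0 p.1 * ∏ j : Fin k, g j.succ (p.2 j) :=
          tsum_congr key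
      _ = (∑' m, g 0 m) * ∑' x : Fin k → ℕ, ∏ j : Fin k, g j.succ (x j) :=
          (tsum_mul_tsum_of_summable_norm (f := g 0)
            (g := fun y : Fin k → ℕ => ∏ j : Fin k, g j.succ (y j)) (hg 0) hs).symm
      _ = ∏ j : Fin (k + 1), ∑' m, g j m := by
          rw [Fin.prod_univ_succ, he]

lemma gcp_pgf_aux (k : ℕ) (lam : Fin k → ℝ) (t u : ℝ) :
    (Summable fun n : ℕ => u ^ n * gcpPmf k lam n t) ∧
      ∑' n : ℕ, u ^ n * gcpPmf k lam n t =
        Real.exp (∑ j : Fin k, lam j * t * (u ^ ((j : ℕ) + 1) - 1)) := by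
  classical
  set g : Fin k → ℕ → ℝ := fun j m =>
    (lam j * t * u ^ ((j : ℕ) + 1)) ^ m / (Nat.factorial m) * Real.exp (-(lam j * t)) with hgdef
  have hg : ∀ j, Summable fun m => ‖g j m‖ := fun j => summable_norm_g _ _
  obtain ⟨hP, hPe⟩ := pi_tsum_prod k g hg
  have keyx : ∀ x : Fin k → ℕ, ∏ j, g j (x j) =
      u ^ (∑ j : Fin k, ((j : ℕ) + 1) * x j) * ∏ j : Fin k,
        (lam j * t) ^ (x j) / (Nat.factorial (x j)) * Real.exp (-(lam j * t)) := by
    intro x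
    have h1 : ∀ j : Fin k, g j (x j) = (u ^ ((j : ℕ) + 1)) ^ (x j) *
        ((lam j * t) ^ (x j) / (Nat.factorial (x j)) * Real.exp (-(lam j * t))) := by
      intro j
      simp only [hgdef, mul_pow]
      ring
    rw [Finset.prod_congr rfl fun j _ => h1 j, Finset.prod_mul_distrib]
    congr 1
    simp only [← pow_mul]
    rw [Finset.prod_pow_eq_pow_sum]
  set F : ℕ × (Fin k → ℕ) → ℝ := fun q =>
    if (∑ j : Fin k, ((j : ℕ) + 1) * q.2 j) = q.1 then ∏ j, g j (q.2 j) else 0 with hF_def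
  have hi : Function.Injective
      (fun x : Fin k → ℕ => (((∑ j : Fin k, ((j : ℕ) + 1) * x j), x) : ℕ × (Fin k → ℕ))) := by
    intro a b hab
    exact (Prod.ext_iff.1 hab).2
  have hF0 : ∀ q ∉ Set.range
      (fun x : Fin k → ℕ => (((∑ j : Fin k, ((j : ℕ) + 1) * x j), x) : ℕ × (Fin k → ℕ))),
      F q = 0 := by
    intro q hq
    simp only [hF_def]
    rw [if_neg]
    intro h
    exact hq ⟨q.2, Prod.ext h rfl⟩
  have hFsum : Summable F := by
    rw [← hi.summable_iff hF0]
    refine hP.of_norm.congr fun x => ?_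
    simp only [Function.comp_apply, hF_def, if_pos rfl, if_true]
  have hrow : ∀ n : ℕ, u ^ n * gcpPmf k lam n t = ∑' x : Fin k → ℕ, F (n, x) := by
    intro n
    rw [gcpPmf, ← tsum_mul_left]
    refine tsum_congr fun x => ?_
    simp only [hF_def]
    by_cases h : (∑ j : Fin k, ((j : ℕ) + 1) * x j) = n
    · rw [if_pos h, if_pos h, keyx x, h]
    · rw [if_neg h, if_neg h, mul_zero]
  have hswap : ∑' n : ℕ, u ^ n * gcpPmf k lam n t = ∑' x : Fin k → ℕ, ∏ j, g j (x j) := by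
    calc ∑' n : ℕ, u ^ n * gcpPmf k lam n t
        = ∑' (n : ℕ) (x : Fin k → ℕ), F (n, x) := tsum_congr hrow
      _ = ∑' (x : Fin k → ℕ) (n : ℕ), F (n, x) := (Summable.tsum_comm (f := fun (n : ℕ) (x : Fin k → ℕ) => F (n, x)) hFsum).symm
      _ = ∑' x : Fin k → ℕ, ∏ j, g j (x j) := by
          refine tsum_congr fun x => ?_
          simp only [hF_def]
          rw [show (fun n : ℕ =>
              if (∑ j : Fin k, ((j : ℕ) + 1) * x j) = n then ∏ j, g j (x j) else 0) =
              (fun n : ℕ =>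
              if n = (∑ j : Fin k, ((j : ℕ) + 1) * x j) then ∏ j, g j (x j) else 0) from
            funext fun n => if_congr eq_comm rfl rfl]
          exact tsum_ite_eq _ _
  constructor
  · exact (hFsum.prod).congr fun n => (hrow n).symm
  · rw [hswap, hPe]
    have hterm : ∀ j : Fin k, ∑' m, g j m =
        Real.exp (lam j * t * u ^ ((j : ℕ) + 1) + -(lam j * t)) := by
      intro j
      simp only [hgdef]
      rw [tsum_mul_right, exp_tsum_aux, ← Real.exp_add]
    rw [Finset.prod_congr rfl fun j _ => hterm j, ← Real.exp_sum]
    congr 1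
    exact Finset.sum_congr rfl fun j _ => by ring

lemma gcpPmf_nonneg (k : ℕ) (lam : Fin k → ℝ) (hlam : ∀ j, 0 ≤ lam j) (n : ℕ) (t : ℝ)
    (ht : 0 ≤ t) : 0 ≤ gcpPmf k lam n t := by
  refine tsum_nonneg fun x => ?_
  split
  · refine Finset.prod_nonneg fun j _ => ?_
    have h1 : (0:ℝ) ≤ (lam j * t) ^ (x j) := pow_nonneg (mul_nonneg (hlam j) ht) _
    have h2 : (0:ℝ) < (Nat.factorial (x j) : ℝ) := by positivity
    positivity
  · exact le_refl 0
set_option maxHeartbeats 1000000 in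
/-- the probability generating function of the IGCP. -/
theorem igcp_pgf (k : ℕ) (hk : 0 < k) (lam : Fin k → ℝ) (hlam : ∀ j, 0 < lam j)
    (k0 : ℕ) (hk0 : 0 < k0) (mu : Fin k0 → ℝ) (hmu : ∀ j0, 0 < mu j0)
    (t : ℝ) (ht : 0 ≤ t) (u : ℝ) (hu : |u| ≤ 1) :
    ∑' n : ℕ, u ^ n * igcpPmf k lam k0 mu n t =
      Real.exp (-(∑ j0 : Fin k0, mu j0 * t *
        (1 - Real.exp (-((((j0 : ℕ) + 1 : ℝ)) *
          ∑ j : Fin k, lam j * (1 - u ^ ((j : ℕ) + 1))))))) := by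
  have habs : ∀ m : ℕ, |u ^ m| ≤ 1 := fun m => by
    rw [abs_pow]; exact pow_le_one₀ (abs_nonneg u) hu
  set a : ℝ := ∑ j : Fin k, lam j * (1 - u ^ ((j : ℕ) + 1)) with ha_def
  have ha : 0 ≤ a := Finset.sum_nonneg fun j _ => mul_nonneg (hlam j).le
    (sub_nonneg.mpr ((le_abs_self _).trans (habs _)))
  set v : ℝ := Real.exp (-a) with hv_def
  have hv0 : 0 < v := Real.exp_pos _
  have hv1 : |v| ≤ 1 := by
    rw [abs_of_pos hv0]
    exact Real.exp_le_one_iff.mpr (neg_nonpos.mpr ha)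
  have hexp : ∀ s : ℕ, ∑ j : Fin k, lam j * (s : ℝ) * (u ^ ((j : ℕ) + 1) - 1)
      = (s : ℝ) * (-a) := by
    intro s
    have h2 : (s : ℝ) * (-a) = ∑ j : Fin k, (s : ℝ) * (-(lam j * (1 - u ^ ((j : ℕ) + 1)))) := by
      rw [ha_def, ← Finset.sum_neg_distrib, Finset.mul_sum]
    rw [h2]
    exact Finset.sum_congr rfl fun j _ => by ring
  have hinner : ∀ s : ℕ, ∑' n : ℕ, u ^ n * gcpPmf k lam n s = v ^ s := by
    intro s
    rw [(gcp_pgf_aux k lam (s : ℝ) u).2, hexp s, Real.exp_nat_mul]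
  have hone : ∀ s : ℕ, ∑' n : ℕ, gcpPmf k lam n s = 1 := by
    intro s
    have h := (gcp_pgf_aux k lam (s : ℝ) 1).2
    simpa using h
  have hsum1 : ∀ s : ℕ, Summable fun n : ℕ => gcpPmf k lam n s := by
    intro s
    have h := (gcp_pgf_aux k lam (s : ℝ) 1).1
    simpa using h
  have hsum0 : Summable fun s : ℕ => gcpPmf k0 mu s t := by
    have h := (gcp_pgf_aux k0 mu t 1).1
    simpa using h
  have hpn : ∀ n s : ℕ, 0 ≤ gcpPmf k lam n s :=
    fun n s => gcpPmf_nonneg k lam (fun j => (hlam j).le) n s (Nat.cast_nonneg s)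
  have hp0 : ∀ s : ℕ, 0 ≤ gcpPmf k0 mu s t :=
    fun s => gcpPmf_nonneg k0 mu (fun j => (hmu j).le) s t ht
  have hB : Summable (fun q : ℕ × ℕ => gcpPmf k lam q.2 q.1 * gcpPmf k0 mu q.1 t) := by
    refine (summable_prod_of_nonneg fun q => mul_nonneg (hpn _ _) (hp0 _)).2 ⟨fun s => ?_, ?_⟩
    · exact (hsum1 s).mul_right (gcpPmf k0 mu s t)
    · have h3 : ∀ s : ℕ, ∑' n : ℕ, gcpPmf k lam n s * gcpPmf k0 mu s t
          = gcpPmf k0 mu s t := fun s => by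
        rw [tsum_mul_right, hone s, one_mul]
      exact hsum0.congr fun s => (h3 s).symm
  have hG : Summable (fun q : ℕ × ℕ =>
      u ^ q.2 * (gcpPmf k lam q.2 q.1 * gcpPmf k0 mu q.1 t)) := by
    refine Summable.of_norm_bounded hB fun q => ?_
    have h4 : (0:ℝ) ≤ gcpPmf k lam q.2 q.1 * gcpPmf k0 mu q.1 t :=
      mul_nonneg (hpn _ _) (hp0 _)
    rw [Real.norm_eq_abs, abs_mul, abs_of_nonneg h4]
    calc |u ^ q.2| * (gcpPmf k lam q.2 q.1 * gcpPmf k0 mu q.1 t)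
        ≤ 1 * (gcpPmf k lam q.2 q.1 * gcpPmf k0 mu q.1 t) :=
          mul_le_mul_of_nonneg_right (habs _) h4
      _ = _ := one_mul _
  calc ∑' n : ℕ, u ^ n * igcpPmf k lam k0 mu n t
      = ∑' (n : ℕ) (s : ℕ), u ^ n * (gcpPmf k lam n s * gcpPmf k0 mu s t) := by
        refine tsum_congr fun n => ?_
        rw [igcpPmf, ← tsum_mul_left]
    _ = ∑' (s : ℕ) (n : ℕ), u ^ n * (gcpPmf k lam n s * gcpPmf k0 mu s t) :=
        Summable.tsum_comm (f := fun (s n : ℕ) =>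
          u ^ n * (gcpPmf k lam n s * gcpPmf k0 mu s t)) hG
    _ = ∑' s : ℕ, v ^ s * gcpPmf k0 mu s t := by
        refine tsum_congr fun s => ?_
        have h5 : ∀ n : ℕ, u ^ n * (gcpPmf k lam n s * gcpPmf k0 mu s t)
            = (u ^ n * gcpPmf k lam n s) * gcpPmf k0 mu s t := fun n => by ring
        rw [tsum_congr h5, tsum_mul_right, hinner s]
    _ = Real.exp (∑ j0 : Fin k0, mu j0 * t * (v ^ ((j0 : ℕ) + 1) - 1)) :=
        (gcp_pgf_aux k0 mu t v).2
    _ = _ := by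
        congr 1
        rw [← Finset.sum_neg_distrib]
        refine Finset.sum_congr rfl fun j0 _ => ?_
        have h6 : v ^ ((j0 : ℕ) + 1) = Real.exp (-((((j0 : ℕ) + 1 : ℝ)) * a)) := by
          rw [hv_def, ← Real.exp_nat_mul]
          congr 1
          push_cast
          ring
        rw [h6]
        ring
end

section
/- For each n ∈ ℕ₀, the function t ↦ p̂(n,t) is differentiable on (0,∞) and satisfies d/dt p̂(n,t) = −μ p̂(n,t) + Σ_{j₀=1}^{k₀} μ_{j₀} e^{−j₀λ} Σ_{m=0}^{n} Σ_{(x₁,…,x_k)∈Ω(k,m)} (Π_{j=1}^k (j₀λ_j)^{x_j}/x_j!) p̂(n−m,t), with initial condition p̂(n,0) = 1 if n = 0 and p̂(n,0) = 0 otherwise. -/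
def OmF (k n : ℕ) : Finset (Fin k → ℕ) :=
  (Fintype.piFinset fun _ : Fin k => Finset.range (n+1)).filter
    fun x => ∑ j : Fin k, ((j:ℕ)+1) * x j = n

lemma mem_OmF {k n : ℕ} {x : Fin k → ℕ} :
    x ∈ OmF k n ↔ ∑ j : Fin k, ((j:ℕ)+1) * x j = n := by
  constructor
  · exact fun h => (Finset.mem_filter.1 h).2
  · intro h
    refine Finset.mem_filter.2 ⟨Fintype.mem_piFinset.2 fun j => Finset.mem_range.2 ?_, h⟩
    have h1 : ((j:ℕ)+1) * x j ≤ n := h ▸ Finset.single_le_sum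
      (f := fun i : Fin k => ((i:ℕ)+1) * x i) (fun i _ => Nat.zero_le _) (Finset.mem_univ j)
    have h2 : x j ≤ ((j:ℕ)+1) * x j := Nat.le_mul_of_pos_left _ (Nat.succ_pos _)
    omega

noncomputable def ccF {k : ℕ} (lam : Fin k → ℝ) (x : Fin k → ℕ) : ℝ :=
  ∏ j, lam j ^ (x j) / (Nat.factorial (x j))

def NNF {k : ℕ} (x : Fin k → ℕ) : ℕ := ∑ j, x j

noncomputable def gP {k : ℕ} (lam : Fin k → ℝ) (n : ℕ) (t : ℝ) : ℝ :=
  ∑ x ∈ OmF k n, ccF lam x * t ^ NNF x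

lemma term_eq {k : ℕ} (lam : Fin k → ℝ) (x : Fin k → ℕ) (t : ℝ) :
    (∏ j : Fin k, (lam j * t) ^ (x j) / (Nat.factorial (x j)) * Real.exp (-(lam j * t)))
      = ccF lam x * t ^ NNF x * Real.exp (-((∑ j, lam j) * t)) := by
  rw [Finset.prod_mul_distrib]
  have h1 : (∏ j : Fin k, (lam j * t) ^ (x j) / (Nat.factorial (x j)))
      = ccF lam x * t ^ NNF x := by
    rw [ccF, NNF, ← Finset.prod_pow_eq_pow_sum, ← Finset.prod_mul_distrib]
    exact Finset.prod_congr rfl fun j _ => by rw [mul_pow]; ring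
  have h2 : (∏ j : Fin k, Real.exp (-(lam j * t))) = Real.exp (-((∑ j, lam j) * t)) := by
    rw [← Real.exp_sum]
    congr 1
    rw [Finset.sum_mul, ← Finset.sum_neg_distrib]
  rw [h1, h2]

lemma gcp_eq {k : ℕ} (lam : Fin k → ℝ) (n : ℕ) (t : ℝ) :
    gcpPmf k lam n t = gP lam n t * Real.exp (-((∑ j, lam j) * t)) := by
  rw [gcpPmf]
  have hsupp : ∀ x : Fin k → ℕ, x ∉ OmF k n →
      (if (∑ j : Fin k, ((j : ℕ) + 1) * x j) = n then
        ∏ j : Fin k, (lam j * t) ^ (x j) / (Nat.factorial (x j)) * Real.exp (-(lam j * t))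
      else 0) = 0 := by
    intro x hx
    rw [if_neg (fun hc => hx (mem_OmF.2 hc))]
  rw [tsum_eq_sum hsupp, gP, Finset.sum_mul]
  refine Finset.sum_congr rfl fun x hx => ?_
  rw [if_pos (mem_OmF.1 hx), term_eq]

lemma wsum_update {k : ℕ} (x : Fin k → ℕ) (j : Fin k) (v : ℕ) (w : Fin k → ℕ) :
    ∑ i, w i * Function.update x j v i + w j * x j = ∑ i, w i * x i + w j * v := by
  rw [← Finset.add_sum_erase _ (fun i => w i * Function.update x j v i) (Finset.mem_univ j),
    ← Finset.add_sum_erase _ (fun i => w i * x i) (Finset.mem_univ j)]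
  have h : ∀ i ∈ Finset.univ.erase j,
      w i * Function.update x j v i = w i * x i := fun i hi => by
    rw [Function.update_of_ne (Finset.ne_of_mem_erase hi)]
  rw [Finset.sum_congr rfl h, Function.update_self]
  ring

lemma nsum_update {k : ℕ} (x : Fin k → ℕ) (j : Fin k) (v : ℕ) :
    NNF (Function.update x j v) + x j = NNF x + v := by
  have := wsum_update x j v (fun _ => 1)
  simpa [NNF] using this

lemma pq_step (c : ℝ) (a : ℕ) (ha : a ≠ 0) :
    c ^ a / (Nat.factorial a) * a = c * (c ^ (a-1) / (Nat.factorial (a-1))) := by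
  obtain ⟨b, rfl⟩ := Nat.exists_eq_succ_of_ne_zero ha
  simp only [Nat.succ_sub_one, Nat.factorial_succ, pow_succ]
  have hb : (Nat.factorial b : ℝ) ≠ 0 := Nat.cast_ne_zero.2 (Nat.factorial_ne_zero b)
  push_cast
  field_simp

lemma NNF_ge {k : ℕ} (x : Fin k → ℕ) (j : Fin k) : x j ≤ NNF x :=
  Finset.single_le_sum (f := fun i => x i) (fun i _ => Nat.zero_le _) (Finset.mem_univ j)

lemma Q_eq {k : ℕ} (lam : Fin k → ℝ) (n : ℕ) (t : ℝ) :
    ∑ x ∈ OmF k n, ccF lam x * ((NNF x : ℝ) * t ^ (NNF x - 1))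
      = ∑ j : Fin k, if ((j:ℕ)+1) ≤ n then lam j * gP lam (n - ((j:ℕ)+1)) t else 0 := by
  have step1 : ∀ x ∈ OmF k n, ccF lam x * ((NNF x : ℝ) * t ^ (NNF x - 1))
      = ∑ j : Fin k, ccF lam x * (x j : ℝ) * t ^ (NNF x - 1) := by
    intro x _
    rw [show ((NNF x : ℝ)) = ∑ j : Fin k, (x j : ℝ) by rw [NNF]; push_cast; rfl,
      Finset.sum_mul, Finset.mul_sum]
    exact Finset.sum_congr rfl fun j _ => by ring
  rw [Finset.sum_congr rfl step1, Finset.sum_comm]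
  refine Finset.sum_congr rfl fun j _ => ?_
  -- restrict to x with x j ≠ 0
  rw [← Finset.sum_filter_of_ne (p := fun x => x j ≠ 0)
    (fun x _ hne h0 => hne (by rw [h0]; simp))]
  by_cases hc : ((j:ℕ)+1) ≤ n
  · rw [if_pos hc, gP, Finset.mul_sum]
    refine Finset.sum_nbij' (i := fun x => Function.update x j (x j - 1))
      (j := fun y => Function.update y j (y j + 1)) ?_ ?_ ?_ ?_ ?_
    · intro x hx
      obtain ⟨hx1, hx2⟩ := Finset.mem_filter.1 hx
      have hs := mem_OmF.1 hx1
      have hw := wsum_update x j (x j - 1) (fun i => (i:ℕ)+1)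
      have hxj : 1 ≤ x j := Nat.one_le_iff_ne_zero.2 hx2
      have hb : ((j:ℕ)+1) * x j ≤ n := hs ▸ Finset.single_le_sum
        (f := fun i : Fin k => ((i:ℕ)+1) * x i) (fun i _ => Nat.zero_le _) (Finset.mem_univ j)
      refine mem_OmF.2 ?_
      have hle : ((j:ℕ)+1) ≤ ((j:ℕ)+1) * x j := Nat.le_mul_of_pos_right _ hxj
      set S := ∑ i : Fin k, ((i:ℕ)+1) * Function.update x j (x j - 1) i with hS
      rw [hs] at hw
      have h3 : ((j:ℕ)+1) * x j = ((j:ℕ)+1) * (x j - 1) + ((j:ℕ)+1) := by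
        rw [← Nat.mul_succ]
        congr 1
        omega
      omega
    · intro y hy
      have hs := mem_OmF.1 hy
      have hw := wsum_update y j (y j + 1) (fun i => (i:ℕ)+1)
      refine Finset.mem_filter.2 ⟨mem_OmF.2 ?_, by simp⟩
      set S := ∑ i : Fin k, ((i:ℕ)+1) * Function.update y j (y j + 1) i with hS
      rw [hs] at hw
      have h3 : ((j:ℕ)+1) * (y j + 1) = ((j:ℕ)+1) * (y j) + ((j:ℕ)+1) := Nat.mul_succ _ _
      omega
    · intro x hx
      have hxj : x j ≠ 0 := (Finset.mem_filter.1 hx).2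
      funext i
      rcases eq_or_ne i j with rfl | hij
      · simp [Function.update_self]; omega
      · simp [Function.update_of_ne hij]
    · intro y hy
      funext i
      rcases eq_or_ne i j with rfl | hij
      · simp [Function.update_self]
      · simp [Function.update_of_ne hij]
    · intro x hx
      obtain ⟨hx1, hx2⟩ := Finset.mem_filter.1 hx
      have hxj : 1 ≤ x j := Nat.one_le_iff_ne_zero.2 hx2
      have hN : NNF (Function.update x j (x j - 1)) = NNF x - 1 := by
        have := nsum_update x j (x j - 1)
        have := NNF_ge x j
        omega
      have hcc : ccF lam x * (x j : ℝ) = lam j * ccF lam (Function.update x j (x j - 1)) := by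
        rw [ccF, ccF, ← Finset.mul_prod_erase _ _ (Finset.mem_univ j),
          ← Finset.mul_prod_erase _ _ (Finset.mem_univ j)]
        have hR : ∀ i ∈ Finset.univ.erase j,
            lam i ^ (Function.update x j (x j - 1) i) /
              (Nat.factorial (Function.update x j (x j - 1) i))
            = lam i ^ (x i) / (Nat.factorial (x i)) := fun i hi => by
          rw [Function.update_of_ne (Finset.ne_of_mem_erase hi)]
        rw [Finset.prod_congr rfl hR, Function.update_self, mul_right_comm,
          pq_step (lam j) (x j) hx2]
        ring
      rw [hN, ← mul_assoc, hcc]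
  · rw [if_neg hc]
    refine Finset.sum_eq_zero fun x hx => ?_
    exfalso
    obtain ⟨hx1, hx2⟩ := Finset.mem_filter.1 hx
    have hs := mem_OmF.1 hx1
    have hb : ((j:ℕ)+1) * x j ≤ n := hs ▸ Finset.single_le_sum
      (f := fun i : Fin k => ((i:ℕ)+1) * x i) (fun i _ => Nat.zero_le _) (Finset.mem_univ j)
    have hxj : 1 ≤ x j := Nat.one_le_iff_ne_zero.2 hx2
    have : ((j:ℕ)+1) ≤ ((j:ℕ)+1) * x j := Nat.le_mul_of_pos_right _ hxj
    omega

lemma gP_hasDerivAt {k : ℕ} (lam : Fin k → ℝ) (n : ℕ) (t : ℝ) :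
    HasDerivAt (fun y => gP lam n y)
      (∑ x ∈ OmF k n, ccF lam x * ((NNF x : ℝ) * t ^ (NNF x - 1))) t :=
  HasDerivAt.fun_sum fun x _ => (hasDerivAt_pow (NNF x) t).const_mul (ccF lam x)

lemma gcp_hasDerivAt {k : ℕ} (lam : Fin k → ℝ) (n : ℕ) (t : ℝ) :
    HasDerivAt (fun y => gcpPmf k lam n y)
      (-(∑ j, lam j) * gcpPmf k lam n t
        + ∑ j : Fin k, if ((j:ℕ)+1) ≤ n then
            lam j * gcpPmf k lam (n - ((j:ℕ)+1)) t else 0) t := by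
  have hfun : (fun y => gcpPmf k lam n y)
      = fun y => gP lam n y * Real.exp (-((∑ j, lam j) * y)) := funext fun y => gcp_eq lam n y
  have he : HasDerivAt (fun y : ℝ => Real.exp (-((∑ j, lam j) * y)))
      (-(∑ j, lam j) * Real.exp (-((∑ j, lam j) * t))) t := by
    have h1 : HasDerivAt (fun y : ℝ => -((∑ j, lam j) * y)) (-(∑ j, lam j)) t := by
      simpa using ((hasDerivAt_id t).const_mul (∑ j, lam j)).fun_neg
    simpa [mul_comm] using h1.exp
  have hd := (gP_hasDerivAt lam n t).fun_mul he
  rw [hfun]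
  refine hd.congr_deriv ?_
  have key : (∑ j : Fin k, if ((j:ℕ)+1) ≤ n then
      lam j * gcpPmf k lam (n - ((j:ℕ)+1)) t else 0)
      = (∑ x ∈ OmF k n, ccF lam x * ((NNF x : ℝ) * t ^ (NNF x - 1)))
        * Real.exp (-((∑ j, lam j) * t)) := by
    rw [Q_eq, Finset.sum_mul]
    refine Finset.sum_congr rfl fun j _ => ?_
    split_ifs with h
    · rw [gcp_eq]; ring
    · simp
  rw [gcp_eq lam n t, key]
  ring

lemma binom_div (a b : ℝ) (x : ℕ) :
    (a+b)^x / (Nat.factorial x)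
      = ∑ p ∈ Finset.range (x+1),
          (a^p / (Nat.factorial p)) * (b^(x-p) / (Nat.factorial (x-p))) := by
  rw [add_pow, Finset.sum_div]
  refine Finset.sum_congr rfl fun p hp => ?_
  have hpx : p ≤ x := Nat.lt_succ_iff.mp (Finset.mem_range.mp hp)
  have h := Nat.choose_mul_factorial_mul_factorial hpx
  have hfx : (Nat.factorial x : ℝ)
      = (Nat.choose x p) * (Nat.factorial p) * (Nat.factorial (x-p)) := by
    exact_mod_cast h.symm
  have h1 : (Nat.factorial p : ℝ) ≠ 0 := Nat.cast_ne_zero.2 (Nat.factorial_ne_zero p)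
  have h2 : (Nat.factorial (x-p) : ℝ) ≠ 0 := Nat.cast_ne_zero.2 (Nat.factorial_ne_zero _)
  have h3 : (0:ℝ) < (Nat.choose x p : ℝ) := by exact_mod_cast Nat.choose_pos hpx
  rw [hfx]
  field_simp

lemma H_expand {k : ℕ} (lam : Fin k → ℝ) (a b : ℝ) (y z : Fin k → ℕ) :
    ccF lam y * a ^ NNF y * (ccF lam z * b ^ NNF z)
    = ∏ j, lam j ^ (y j + z j) * (a ^ (y j) / (Nat.factorial (y j)))
        * (b ^ (z j) / (Nat.factorial (z j))) := by
  rw [ccF, ccF, NNF, NNF, ← Finset.prod_pow_eq_pow_sum, ← Finset.prod_pow_eq_pow_sum,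
    ← Finset.prod_mul_distrib, ← Finset.prod_mul_distrib, ← Finset.prod_mul_distrib]
  exact Finset.prod_congr rfl fun j _ => by rw [pow_add]; ring

lemma gP_conv {k : ℕ} (lam : Fin k → ℝ) (n : ℕ) (a b : ℝ) :
    gP lam n (a+b) = ∑ m ∈ Finset.range (n+1), gP lam m a * gP lam (n-m) b := by
  classical
  set T : Finset ((Fin k → ℕ) × (Fin k → ℕ)) :=
    ((Fintype.piFinset fun _ : Fin k => Finset.range (n+1)) ×ˢ
      (Fintype.piFinset fun _ : Fin k => Finset.range (n+1))).filter
      (fun yz => (∑ j : Fin k, ((j:ℕ)+1) * (yz.1 j + yz.2 j)) = n) with hT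
  have mem_T : ∀ yz : (Fin k → ℕ) × (Fin k → ℕ), yz ∈ T ↔
      (∑ j : Fin k, ((j:ℕ)+1) * (yz.1 j + yz.2 j)) = n := by
    intro yz
    constructor
    · exact fun h => (Finset.mem_filter.1 h).2
    · intro h
      refine Finset.mem_filter.2 ⟨Finset.mem_product.2
        ⟨Fintype.mem_piFinset.2 fun j => Finset.mem_range.2 ?_,
         Fintype.mem_piFinset.2 fun j => Finset.mem_range.2 ?_⟩, h⟩ <;>
      · have h1 : ((j:ℕ)+1) * (yz.1 j + yz.2 j) ≤ n := h ▸ Finset.single_le_sum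
          (f := fun i : Fin k => ((i:ℕ)+1) * (yz.1 i + yz.2 i)) (fun i _ => Nat.zero_le _)
          (Finset.mem_univ j)
        have h2 : yz.1 j + yz.2 j ≤ ((j:ℕ)+1) * (yz.1 j + yz.2 j) :=
          Nat.le_mul_of_pos_left _ (Nat.succ_pos _)
        omega
  have sum_split : ∀ yz : (Fin k → ℕ) × (Fin k → ℕ),
      (∑ j : Fin k, ((j:ℕ)+1) * (yz.1 j + yz.2 j))
        = (∑ j : Fin k, ((j:ℕ)+1) * yz.1 j) + (∑ j : Fin k, ((j:ℕ)+1) * yz.2 j) := by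
    intro yz
    rw [← Finset.sum_add_distrib]
    exact Finset.sum_congr rfl fun j _ => Nat.mul_add _ _ _
  -- RHS equals sum over T
  have hR : ∑ m ∈ Finset.range (n+1), gP lam m a * gP lam (n-m) b
      = ∑ yz ∈ T, ccF lam yz.1 * a ^ NNF yz.1 * (ccF lam yz.2 * b ^ NNF yz.2) := by
    have hmaps : ∀ yz ∈ T, (∑ j : Fin k, ((j:ℕ)+1) * yz.1 j) ∈ Finset.range (n+1) := by
      intro yz hyz
      have h := (mem_T yz).1 hyz
      rw [sum_split] at h
      exact Finset.mem_range.2 (by omega)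
    rw [← Finset.sum_fiberwise_of_maps_to hmaps
      (fun yz => ccF lam yz.1 * a ^ NNF yz.1 * (ccF lam yz.2 * b ^ NNF yz.2))]
    refine Finset.sum_congr rfl fun m hm => ?_
    have hmn : m ≤ n := Nat.lt_succ_iff.mp (Finset.mem_range.mp hm)
    have hfib : T.filter (fun yz => (∑ j : Fin k, ((j:ℕ)+1) * yz.1 j) = m)
        = (OmF k m) ×ˢ (OmF k (n-m)) := by
      ext yz
      rw [Finset.mem_filter, mem_T, Finset.mem_product, mem_OmF, mem_OmF, sum_split yz]
      omega
    rw [hfib, Finset.sum_product, gP, gP, Finset.sum_mul_sum]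
  -- LHS expansion
  have hL : gP lam n (a+b)
      = ∑ q ∈ (OmF k n).sigma (fun x => Fintype.piFinset fun j => Finset.range (x j + 1)),
          ∏ j, lam j ^ (q.1 j) * (a ^ (q.2 j) / (Nat.factorial (q.2 j)))
            * (b ^ (q.1 j - q.2 j) / (Nat.factorial (q.1 j - q.2 j))) := by
    rw [gP, Finset.sum_sigma]
    refine Finset.sum_congr rfl fun x hx => ?_
    have e1 : ccF lam x * (a+b) ^ NNF x
        = ∏ j, lam j ^ (x j) * ((a+b) ^ (x j) / (Nat.factorial (x j))) := by
      rw [ccF, NNF, ← Finset.prod_pow_eq_pow_sum, ← Finset.prod_mul_distrib]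
      exact Finset.prod_congr rfl fun j _ => by ring
    have e2 : ∀ j : Fin k, lam j ^ (x j) * ((a+b) ^ (x j) / (Nat.factorial (x j)))
        = ∑ p ∈ Finset.range (x j + 1),
            lam j ^ (x j) * (a^p / (Nat.factorial p))
              * (b^(x j - p) / (Nat.factorial (x j - p))) := by
      intro j
      rw [binom_div, Finset.mul_sum]
      exact Finset.sum_congr rfl fun p _ => by ring
    rw [e1, Finset.prod_congr rfl (fun j _ => e2 j), Finset.prod_univ_sum]
  rw [hL, hR]
  refine Finset.sum_nbij' (i := fun q => (q.2, fun j => q.1 j - q.2 j))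
    (j := fun yz => ⟨fun j => yz.1 j + yz.2 j, yz.1⟩) ?_ ?_ ?_ ?_ ?_
  · rintro ⟨x, p⟩ hq
    obtain ⟨hx, hp⟩ := Finset.mem_sigma.1 hq
    have hple : ∀ j, p j ≤ x j := fun j =>
      Nat.lt_succ_iff.mp (Finset.mem_range.mp (Fintype.mem_piFinset.1 hp j))
    refine (mem_T _).2 ?_
    have hfix : ∀ j : Fin k, p j + (x j - p j) = x j := fun j => by
      have := hple j; omega
    simp only
    calc ∑ j : Fin k, ((j:ℕ)+1) * (p j + (x j - p j))
        = ∑ j : Fin k, ((j:ℕ)+1) * x j :=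
          Finset.sum_congr rfl fun j _ => by rw [hfix j]
      _ = n := mem_OmF.1 hx
  · rintro ⟨y, z⟩ hyz
    have h := (mem_T _).1 hyz
    dsimp only at h
    refine Finset.mem_sigma.2 ⟨mem_OmF.2 h, Fintype.mem_piFinset.2 fun j =>
      Finset.mem_range.2 ?_⟩
    show y j < (y j + z j) + 1
    omega
  · rintro ⟨x, p⟩ hq
    obtain ⟨hx, hp⟩ := Finset.mem_sigma.1 hq
    have hple : ∀ j, p j ≤ x j := fun j =>
      Nat.lt_succ_iff.mp (Finset.mem_range.mp (Fintype.mem_piFinset.1 hp j))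
    have hfx : (fun j => p j + (x j - p j)) = x := funext fun j => by
      have := hple j; omega
    simp only
    rw [hfx]
  · rintro ⟨y, z⟩ hyz
    simp only
    have h2 : (fun j => y j + z j - y j) = z := funext fun j => by omega
    rw [h2]
  · rintro ⟨x, p⟩ hq
    obtain ⟨hx, hp⟩ := Finset.mem_sigma.1 hq
    have hple : ∀ j, p j ≤ x j := fun j =>
      Nat.lt_succ_iff.mp (Finset.mem_range.mp (Fintype.mem_piFinset.1 hp j))
    rw [H_expand]
    refine Finset.prod_congr rfl fun j _ => ?_
    simp only
    rw [show p j + (x j - p j) = x j from by have := hple j; omega]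

lemma gcp_eq_sum_prod {k : ℕ} (lam : Fin k → ℝ) (n : ℕ) (t : ℝ) :
    gcpPmf k lam n t = ∑ x ∈ OmF k n,
      ∏ j : Fin k, (lam j * t) ^ (x j) / (Nat.factorial (x j)) * Real.exp (-(lam j * t)) := by
  rw [gcpPmf]
  have hsupp : ∀ x : Fin k → ℕ, x ∉ OmF k n →
      (if (∑ j : Fin k, ((j : ℕ) + 1) * x j) = n then
        ∏ j : Fin k, (lam j * t) ^ (x j) / (Nat.factorial (x j)) * Real.exp (-(lam j * t))
      else 0) = 0 := fun x hx => by
    rw [if_neg (fun hc => hx (mem_OmF.2 hc))]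
  rw [tsum_eq_sum hsupp]
  exact Finset.sum_congr rfl fun x hx => if_pos (mem_OmF.1 hx)

lemma gcp_nonneg {k : ℕ} {lam : Fin k → ℝ} (hlam : ∀ j, 0 ≤ lam j) (n : ℕ) {t : ℝ}
    (ht : 0 ≤ t) : 0 ≤ gcpPmf k lam n t := by
  rw [gcp_eq_sum_prod]
  refine Finset.sum_nonneg fun x _ => Finset.prod_nonneg fun j _ => ?_
  have : 0 ≤ lam j * t := mul_nonneg (hlam j) ht
  positivity

lemma card_OmF_le (k m : ℕ) : ((OmF k m).card : ℝ) ≤ ((m:ℝ)+1)^k := by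
  have h1 : (OmF k m).card ≤ (Fintype.piFinset fun _ : Fin k => Finset.range (m+1)).card :=
    Finset.card_filter_le _ _
  have h2 : (Fintype.piFinset fun _ : Fin k => Finset.range (m+1)).card = (m+1)^k := by
    rw [Fintype.card_piFinset]
    simp
  calc ((OmF k m).card : ℝ) ≤ (((m+1)^k : ℕ) : ℝ) := by exact_mod_cast h2 ▸ h1
    _ = ((m:ℝ)+1)^k := by push_cast; ring

lemma poisson_factor_le_one {u : ℝ} (hu : 0 ≤ u) (x : ℕ) :
    u ^ x / (Nat.factorial x) * Real.exp (-u) ≤ 1 := by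
  have h := Real.pow_div_factorial_le_exp u hu x
  have he : (0:ℝ) < Real.exp (-u) := Real.exp_pos _
  calc u ^ x / (Nat.factorial x) * Real.exp (-u)
      ≤ Real.exp u * Real.exp (-u) := by
        exact mul_le_mul_of_nonneg_right h he.le
    _ = 1 := by rw [← Real.exp_add]; simp

lemma poisson_factor_le_geom {u : ℝ} (hu : 0 ≤ u) (x : ℕ) :
    u ^ x / (Nat.factorial x) * Real.exp (-u) ≤ 2 ^ x * Real.exp (-(u/2)) := by
  have h : u ^ x / (Nat.factorial x) ≤ 2 ^ x * Real.exp (u/2) := by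
    have h2 := Real.pow_div_factorial_le_exp (u/2) (by linarith) x
    have : u ^ x / (Nat.factorial x) = 2 ^ x * ((u/2) ^ x / (Nat.factorial x)) := by
      rw [div_pow]
      have : (2:ℝ) ^ x ≠ 0 := by positivity
      field_simp
    rw [this]
    exact mul_le_mul_of_nonneg_left h2 (by positivity)
  calc u ^ x / (Nat.factorial x) * Real.exp (-u)
      ≤ (2 ^ x * Real.exp (u/2)) * Real.exp (-u) :=
        mul_le_mul_of_nonneg_right h (Real.exp_pos _).le
    _ = 2 ^ x * Real.exp (-(u/2)) := by
        rw [mul_assoc, ← Real.exp_add]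
        ring_nf

lemma gcp_le_poly {k : ℕ} {lam : Fin k → ℝ} (hlam : ∀ j, 0 ≤ lam j) (m : ℕ) {t : ℝ}
    (ht : 0 ≤ t) : gcpPmf k lam m t ≤ ((m:ℝ)+1)^k := by
  rw [gcp_eq_sum_prod]
  calc ∑ x ∈ OmF k m, ∏ j : Fin k,
        (lam j * t) ^ (x j) / (Nat.factorial (x j)) * Real.exp (-(lam j * t))
      ≤ ∑ x ∈ OmF k m, (1:ℝ) := by
        refine Finset.sum_le_sum fun x _ => ?_
        refine Finset.prod_le_one (fun j _ => ?_) (fun j _ => ?_)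
        · have : 0 ≤ lam j * t := mul_nonneg (hlam j) ht
          positivity
        · exact poisson_factor_le_one (mul_nonneg (hlam j) ht) (x j)
    _ = ((OmF k m).card : ℝ) := by simp
    _ ≤ ((m:ℝ)+1)^k := card_OmF_le k m

lemma NNF_le_of_mem {k n : ℕ} {x : Fin k → ℕ} (hx : x ∈ OmF k n) : NNF x ≤ n := by
  rw [NNF, ← mem_OmF.1 hx]
  exact Finset.sum_le_sum fun j _ => Nat.le_mul_of_pos_left _ (Nat.succ_pos _)

lemma gcp_le_geom {k : ℕ} {lam : Fin k → ℝ} (hlam : ∀ j, 0 ≤ lam j) (n : ℕ) {t : ℝ}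
    (ht : 0 ≤ t) :
    gcpPmf k lam n t ≤ ((n:ℝ)+1)^k * 2^n * Real.exp (-((∑ j, lam j)/2 * t)) := by
  rw [gcp_eq_sum_prod]
  have hterm : ∀ x ∈ OmF k n, ∏ j : Fin k,
      (lam j * t) ^ (x j) / (Nat.factorial (x j)) * Real.exp (-(lam j * t))
      ≤ 2^n * Real.exp (-((∑ j, lam j)/2 * t)) := by
    intro x hx
    have step : ∏ j : Fin k,
        (lam j * t) ^ (x j) / (Nat.factorial (x j)) * Real.exp (-(lam j * t))
        ≤ ∏ j : Fin k, 2 ^ (x j) * Real.exp (-((lam j * t)/2)) := by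
      refine Finset.prod_le_prod (fun j _ => ?_) (fun j _ => ?_)
      · have : 0 ≤ lam j * t := mul_nonneg (hlam j) ht
        positivity
      · exact poisson_factor_le_geom (mul_nonneg (hlam j) ht) (x j)
    refine step.trans ?_
    rw [Finset.prod_mul_distrib, ← Real.exp_sum, Finset.prod_pow_eq_pow_sum]
    have e1 : (∑ j : Fin k, -((lam j * t)/2)) = -((∑ j, lam j)/2 * t) := by
      rw [Finset.sum_neg_distrib, div_mul_eq_mul_div, Finset.sum_mul, Finset.sum_div]
    rw [e1]
    have h2 : (2:ℝ) ^ (∑ j, x j) ≤ 2 ^ n := by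
      apply pow_le_pow_right₀ one_le_two
      exact NNF_le_of_mem hx
    exact mul_le_mul_of_nonneg_right h2 (Real.exp_pos _).le
  calc ∑ x ∈ OmF k n, ∏ j : Fin k,
        (lam j * t) ^ (x j) / (Nat.factorial (x j)) * Real.exp (-(lam j * t))
      ≤ ∑ x ∈ OmF k n, 2^n * Real.exp (-((∑ j, lam j)/2 * t)) := Finset.sum_le_sum hterm
    _ = ((OmF k n).card : ℝ) * (2^n * Real.exp (-((∑ j, lam j)/2 * t))) := by
        rw [Finset.sum_const, nsmul_eq_mul]
    _ ≤ ((n:ℝ)+1)^k * (2^n * Real.exp (-((∑ j, lam j)/2 * t))) := by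
        refine mul_le_mul_of_nonneg_right (card_OmF_le k n) (by positivity)
    _ = ((n:ℝ)+1)^k * 2^n * Real.exp (-((∑ j, lam j)/2 * t)) := by ring

lemma gcp_zero {k : ℕ} (lam : Fin k → ℝ) (m : ℕ) :
    gcpPmf k lam m 0 = if m = 0 then 1 else 0 := by
  rw [gcpPmf]
  rw [tsum_eq_single (0 : Fin k → ℕ) ?_]
  · simp [eq_comm]
  · intro x hx
    obtain ⟨j, hj⟩ := Function.ne_iff.1 hx
    split_ifs with h
    · refine Finset.prod_eq_zero (Finset.mem_univ j) ?_
      rw [mul_zero, zero_pow hj]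
      simp
    · rfl

lemma summable_aux (p : ℕ) {r : ℝ} (h0 : 0 < r) (h1 : r < 1) :
    Summable (fun s : ℕ => ((s:ℝ)+1)^p * r^s) := by
  have hb : ‖r‖ < 1 := by rwa [Real.norm_eq_abs, abs_of_pos h0]
  have h := summable_pow_mul_geometric_of_norm_lt_one p hb
  refine (((summable_nat_add_iff 1).2 h).mul_left r⁻¹).congr fun s => ?_
  have hr : r ≠ 0 := ne_of_gt h0
  push_cast
  field_simp
  ring

lemma gcp_conv {k : ℕ} (lam : Fin k → ℝ) (n : ℕ) (a b : ℝ) :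
    gcpPmf k lam n (a+b)
      = ∑ m ∈ Finset.range (n+1), gcpPmf k lam m a * gcpPmf k lam (n-m) b := by
  rw [gcp_eq, gP_conv, Finset.sum_mul]
  refine Finset.sum_congr rfl fun m hm => ?_
  rw [gcp_eq, gcp_eq]
  rw [show -((∑ j, lam j) * (a+b)) = -((∑ j, lam j) * a) + -((∑ j, lam j) * b) by ring,
    Real.exp_add]
  ring

lemma q_eq {k : ℕ} (lam : Fin k → ℝ) (m : ℕ) (u : ℝ) :
    (∑' x : Fin k → ℕ, if (∑ j : Fin k, ((j : ℕ) + 1) * x j) = m then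
      ∏ j : Fin k, (u * lam j) ^ (x j) / (Nat.factorial (x j)) else 0)
    = gP lam m u := by
  have hsupp : ∀ x : Fin k → ℕ, x ∉ OmF k m →
      (if (∑ j : Fin k, ((j : ℕ) + 1) * x j) = m then
        ∏ j : Fin k, (u * lam j) ^ (x j) / (Nat.factorial (x j)) else 0) = 0 := fun x hx => by
    rw [if_neg (fun hc => hx (mem_OmF.2 hc))]
  rw [tsum_eq_sum hsupp, gP]
  refine Finset.sum_congr rfl fun x hx => ?_
  rw [if_pos (mem_OmF.1 hx), ccF, NNF, ← Finset.prod_pow_eq_pow_sum, ← Finset.prod_mul_distrib]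
  exact Finset.prod_congr rfl fun j _ => by rw [mul_pow]; ring

lemma gcp_le_geom_nat {k : ℕ} {lam : Fin k → ℝ} (hlam : ∀ j, 0 ≤ lam j) (n : ℕ) (s : ℕ) :
    gcpPmf k lam n (s:ℝ) ≤ ((n:ℝ)+1)^k * 2^n * (Real.exp (-((∑ j, lam j)/2)))^s := by
  have h1 := gcp_le_geom hlam n (t := (s:ℝ)) (Nat.cast_nonneg s)
  have h2 : (Real.exp (-((∑ j, lam j)/2)))^s = Real.exp (-((∑ j, lam j)/2 * (s:ℝ))) := by
    rw [← Real.exp_nat_mul]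
    congr 1
    ring
  exact h1.trans_eq (by rw [h2])

lemma summable_P_poly {k : ℕ} (hk : 0 < k) {lam : Fin k → ℝ} (hlam : ∀ j, 0 < lam j) (n p : ℕ) :
    Summable (fun s : ℕ => ((s:ℝ)+1)^p * gcpPmf k lam n (s:ℝ)) := by
  have hlam' : ∀ j, 0 ≤ lam j := fun j => (hlam j).le
  have hΛpos : 0 < ∑ j, lam j :=
    Finset.sum_pos (fun j _ => hlam j) ⟨⟨0, hk⟩, Finset.mem_univ _⟩
  set r : ℝ := Real.exp (-((∑ j, lam j)/2)) with hr
  have hr0 : 0 < r := Real.exp_pos _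
  have hr1 : r < 1 := by
    rw [hr, show (1:ℝ) = Real.exp 0 by rw [Real.exp_zero]]
    exact Real.exp_lt_exp.2 (by linarith)
  refine Summable.of_norm_bounded
    ((summable_aux p hr0 hr1).mul_left (((n:ℝ)+1)^k * 2^n)) (fun s => ?_)
  rw [Real.norm_eq_abs, abs_of_nonneg (mul_nonneg (by positivity)
    (gcp_nonneg hlam' n (Nat.cast_nonneg s)))]
  have hb := gcp_le_geom_nat hlam' n s
  rw [← hr] at hb
  calc ((s:ℝ)+1)^p * gcpPmf k lam n (s:ℝ)
      ≤ ((s:ℝ)+1)^p * (((n:ℝ)+1)^k * 2^n * r^s) :=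
        mul_le_mul_of_nonneg_left hb (by positivity)
    _ = (((n:ℝ)+1)^k * 2^n) * (((s:ℝ)+1)^p * r^s) := by ring

noncomputable def Dfun (k0 : ℕ) (mu : Fin k0 → ℝ) (m : ℕ) (y : ℝ) : ℝ :=
  -(∑ j0, mu j0) * gcpPmf k0 mu m y
    + ∑ j0 : Fin k0, if ((j0:ℕ)+1) ≤ m then
        mu j0 * gcpPmf k0 mu (m-((j0:ℕ)+1)) y else 0

lemma Dfun_hasDerivAt {k0 : ℕ} (mu : Fin k0 → ℝ) (m : ℕ) (t : ℝ) :
    HasDerivAt (fun y => gcpPmf k0 mu m y) (Dfun k0 mu m t) t :=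
  gcp_hasDerivAt mu m t

lemma Dfun_bound {k0 : ℕ} {mu : Fin k0 → ℝ} (hmu : ∀ j, 0 ≤ mu j) (m : ℕ) {y : ℝ}
    (hy : 0 ≤ y) : ‖Dfun k0 mu m y‖ ≤ 2 * (∑ j0, mu j0) * ((m:ℝ)+1)^k0 := by
  have hM0 : 0 ≤ ∑ j0, mu j0 := Finset.sum_nonneg fun j _ => hmu j
  rw [Real.norm_eq_abs, Dfun]
  have h1 : |(-(∑ j0, mu j0)) * gcpPmf k0 mu m y| ≤ (∑ j0, mu j0) * ((m:ℝ)+1)^k0 := by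
    rw [abs_mul, abs_neg, abs_of_nonneg hM0, abs_of_nonneg (gcp_nonneg hmu m hy)]
    exact mul_le_mul_of_nonneg_left (gcp_le_poly hmu m hy) hM0
  have h2 : |∑ j0 : Fin k0, if ((j0:ℕ)+1) ≤ m then
      mu j0 * gcpPmf k0 mu (m-((j0:ℕ)+1)) y else 0| ≤ (∑ j0, mu j0) * ((m:ℝ)+1)^k0 := by
    refine (Finset.abs_sum_le_sum_abs _ _).trans ?_
    rw [Finset.sum_mul]
    refine Finset.sum_le_sum fun j0 _ => ?_
    split_ifs with h
    · rw [abs_mul, abs_of_nonneg (hmu j0), abs_of_nonneg (gcp_nonneg hmu _ hy)]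
      refine mul_le_mul_of_nonneg_left ?_ (hmu j0)
      refine (gcp_le_poly hmu _ hy).trans ?_
      refine pow_le_pow_left₀ (by positivity) ?_ k0
      have : ((m-((j0:ℕ)+1) : ℕ) : ℝ) ≤ (m:ℝ) := by exact_mod_cast Nat.sub_le _ _
      linarith
    · simp only [abs_zero]
      exact mul_nonneg (hmu j0) (by positivity)
  exact (abs_add_le _ _).trans (by linarith)


/-- the system of difference-differential equations governing the
state probabilities of the IGCP, together with the initial condition. -/
theorem igcp_de (k : ℕ) (hk : 0 < k) (lam : Fin k → ℝ) (hlam : ∀ j, 0 < lam j)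
    (k0 : ℕ) (hk0 : 0 < k0) (mu : Fin k0 → ℝ) (hmu : ∀ j0, 0 < mu j0) (n : ℕ) :
    (∀ t : ℝ, 0 < t →
      HasDerivAt (fun s : ℝ => igcpPmf k lam k0 mu n s)
        (-(∑ j0 : Fin k0, mu j0) * igcpPmf k lam k0 mu n t +
          ∑ j0 : Fin k0, mu j0 * Real.exp (-(((j0 : ℕ) + 1 : ℝ) * ∑ j : Fin k, lam j)) *
            ∑ m ∈ Finset.range (n + 1),
              (∑' x : Fin k → ℕ,
                if (∑ j : Fin k, ((j : ℕ) + 1) * x j) = m then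
                  ∏ j : Fin k, (((j0 : ℕ) + 1 : ℝ) * lam j) ^ (x j) /
                    (Nat.factorial (x j))
                else 0) *
              igcpPmf k lam k0 mu (n - m) t) t) ∧
    igcpPmf k lam k0 mu n 0 = if n = 0 then 1 else 0 := by
  have hlam' : ∀ j, 0 ≤ lam j := fun j => (hlam j).le
  have hmu' : ∀ j, 0 ≤ mu j := fun j => (hmu j).le
  have hMpos : 0 < ∑ j0, mu j0 :=
    Finset.sum_pos (fun j _ => hmu j) ⟨⟨0, hk0⟩, Finset.mem_univ _⟩
  have hΛpos : 0 < ∑ j, lam j :=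
    Finset.sum_pos (fun j _ => hlam j) ⟨⟨0, hk⟩, Finset.mem_univ _⟩
  constructor
  · intro t ht
    -- summability of the basic products
    have SA : ∀ n', Summable (fun s : ℕ => gcpPmf k lam n' (s:ℝ) * gcpPmf k0 mu s t) := by
      intro n'
      refine Summable.of_norm_bounded (summable_P_poly hk hlam n' k0) (fun s => ?_)
      rw [Real.norm_eq_abs, abs_of_nonneg (mul_nonneg
        (gcp_nonneg hlam' n' (Nat.cast_nonneg s)) (gcp_nonneg hmu' s ht.le))]
      calc gcpPmf k lam n' (s:ℝ) * gcpPmf k0 mu s t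
          ≤ gcpPmf k lam n' (s:ℝ) * ((s:ℝ)+1)^k0 :=
            mul_le_mul_of_nonneg_left (gcp_le_poly hmu' s ht.le)
              (gcp_nonneg hlam' n' (Nat.cast_nonneg s))
        _ = ((s:ℝ)+1)^k0 * gcpPmf k lam n' (s:ℝ) := mul_comm _ _
    -- the uniform bound
    set r : ℝ := Real.exp (-((∑ j, lam j)/2)) with hr
    have hr0 : 0 < r := Real.exp_pos _
    have hr1 : r < 1 := by
      rw [hr, show (1:ℝ) = Real.exp 0 by rw [Real.exp_zero]]
      exact Real.exp_lt_exp.2 (by linarith)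
    set C : ℝ := ((n:ℝ)+1)^k * 2^n with hC
    have hC0 : (0:ℝ) ≤ C := by rw [hC]; positivity
    have hu : Summable (fun s : ℕ =>
        (2 * (∑ j0, mu j0) * C) * (((s:ℝ)+1)^k0 * r^s)) :=
      (summable_aux k0 hr0 hr1).mul_left _
    have hbound : ∀ (s : ℕ) (y : ℝ), y ∈ Set.Ioi (0:ℝ) →
        ‖gcpPmf k lam n (s:ℝ) * Dfun k0 mu s y‖
          ≤ (2 * (∑ j0, mu j0) * C) * (((s:ℝ)+1)^k0 * r^s) := by
      intro s y hy
      have hy0 : (0:ℝ) ≤ y := (Set.mem_Ioi.1 hy).le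
      rw [norm_mul]
      have h1 : ‖gcpPmf k lam n (s:ℝ)‖ ≤ C * r^s := by
        rw [Real.norm_eq_abs, abs_of_nonneg (gcp_nonneg hlam' n (Nat.cast_nonneg s))]
        have hb := gcp_le_geom_nat hlam' n s
        rw [← hr, ← hC] at hb
        exact hb
      have h2 : ‖Dfun k0 mu s y‖ ≤ 2 * (∑ j0, mu j0) * ((s:ℝ)+1)^k0 :=
        Dfun_bound hmu' s hy0
      calc ‖gcpPmf k lam n (s:ℝ)‖ * ‖Dfun k0 mu s y‖
          ≤ (C * r^s) * (2 * (∑ j0, mu j0) * ((s:ℝ)+1)^k0) :=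
            mul_le_mul h1 h2 (norm_nonneg _) (by positivity)
        _ = (2 * (∑ j0, mu j0) * C) * (((s:ℝ)+1)^k0 * r^s) := by ring
    have KEY : HasDerivAt (fun z : ℝ => ∑' s : ℕ, gcpPmf k lam n (s:ℝ) * gcpPmf k0 mu s z)
        (∑' s : ℕ, gcpPmf k lam n (s:ℝ) * Dfun k0 mu s t) t :=
      hasDerivAt_tsum_of_isPreconnected hu isOpen_Ioi isPreconnected_Ioi
        (fun s y _ => (Dfun_hasDerivAt mu s y).const_mul (gcpPmf k lam n (s:ℝ)))
        hbound (Set.mem_Ioi.2 ht) (SA n) (Set.mem_Ioi.2 ht)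
    -- summability of the shifted pieces
    have Sh : ∀ j0 : Fin k0, Summable (fun s : ℕ => gcpPmf k lam n (s:ℝ) *
        (if ((j0:ℕ)+1) ≤ s then mu j0 * gcpPmf k0 mu (s-((j0:ℕ)+1)) t else 0)) := by
      intro j0
      refine Summable.of_norm_bounded
        ((summable_P_poly hk hlam n k0).mul_left (mu j0)) (fun s => ?_)
      rw [Real.norm_eq_abs, abs_mul, abs_of_nonneg (gcp_nonneg hlam' n (Nat.cast_nonneg s))]
      have hite : |if ((j0:ℕ)+1) ≤ s then mu j0 * gcpPmf k0 mu (s-((j0:ℕ)+1)) t else 0|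
          ≤ mu j0 * ((s:ℝ)+1)^k0 := by
        split_ifs with h
        · rw [abs_mul, abs_of_nonneg (hmu' j0), abs_of_nonneg (gcp_nonneg hmu' _ ht.le)]
          refine mul_le_mul_of_nonneg_left ?_ (hmu' j0)
          refine (gcp_le_poly hmu' _ ht.le).trans ?_
          refine pow_le_pow_left₀ (by positivity) ?_ k0
          have : ((s-((j0:ℕ)+1) : ℕ) : ℝ) ≤ (s:ℝ) := by exact_mod_cast Nat.sub_le _ _
          linarith
        · simp only [abs_zero]
          exact mul_nonneg (hmu' j0) (by positivity)
      calc gcpPmf k lam n (s:ℝ) * |if ((j0:ℕ)+1) ≤ s then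
            mu j0 * gcpPmf k0 mu (s-((j0:ℕ)+1)) t else 0|
          ≤ gcpPmf k lam n (s:ℝ) * (mu j0 * ((s:ℝ)+1)^k0) :=
            mul_le_mul_of_nonneg_left hite (gcp_nonneg hlam' n (Nat.cast_nonneg s))
        _ = mu j0 * (((s:ℝ)+1)^k0 * gcpPmf k lam n (s:ℝ)) := by ring
    -- identify the derivative value
    have hDsplit : ∀ s : ℕ, gcpPmf k lam n (s:ℝ) * Dfun k0 mu s t
        = -(∑ j0, mu j0) * (gcpPmf k lam n (s:ℝ) * gcpPmf k0 mu s t)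
          + ∑ j0 : Fin k0, gcpPmf k lam n (s:ℝ) *
              (if ((j0:ℕ)+1) ≤ s then mu j0 * gcpPmf k0 mu (s-((j0:ℕ)+1)) t else 0) := by
      intro s
      rw [Dfun, mul_add, Finset.mul_sum]
      ring_nf
    have hper : ∀ j0 : Fin k0, (∑' s : ℕ, gcpPmf k lam n (s:ℝ) *
        (if ((j0:ℕ)+1) ≤ s then mu j0 * gcpPmf k0 mu (s-((j0:ℕ)+1)) t else 0))
        = mu j0 * Real.exp (-(((j0 : ℕ) + 1 : ℝ) * ∑ j : Fin k, lam j)) *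
            ∑ m ∈ Finset.range (n + 1),
              (∑' x : Fin k → ℕ,
                if (∑ j : Fin k, ((j : ℕ) + 1) * x j) = m then
                  ∏ j : Fin k, (((j0 : ℕ) + 1 : ℝ) * lam j) ^ (x j) /
                    (Nat.factorial (x j))
                else 0) *
              igcpPmf k lam k0 mu (n - m) t := by
      intro j0
      set c : ℕ := (j0:ℕ)+1 with hc
      have hcr : ((c:ℕ):ℝ) = ((j0:ℕ):ℝ) + 1 := by rw [hc]; push_cast; ring
      have hzero : ∀ i ∈ Finset.range c, gcpPmf k lam n (i:ℝ) *
          (if c ≤ i then mu j0 * gcpPmf k0 mu (i-c) t else 0) = 0 := by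
        intro i hi
        rw [if_neg (by simpa using Finset.mem_range.1 hi), mul_zero]
      have hs1 := Summable.sum_add_tsum_nat_add c (Sh j0)
      rw [← hs1, Finset.sum_eq_zero hzero, zero_add]
      have hsc : ∀ s : ℕ, gcpPmf k lam n ((s+c:ℕ):ℝ) *
          (if c ≤ s + c then mu j0 * gcpPmf k0 mu ((s+c)-c) t else 0)
          = ∑ m ∈ Finset.range (n+1), (mu j0 * gcpPmf k lam m (c:ℝ)) *
              (gcpPmf k lam (n-m) (s:ℝ) * gcpPmf k0 mu s t) := by
        intro s
        rw [if_pos (Nat.le_add_left c s), Nat.add_sub_cancel]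
        have hcast : ((s+c : ℕ) : ℝ) = (c:ℝ) + (s:ℝ) := by push_cast; ring
        rw [hcast, gcp_conv, Finset.sum_mul]
        exact Finset.sum_congr rfl fun m _ => by ring
      rw [tsum_congr hsc, Summable.tsum_finsetSum (fun m _ => ((SA (n-m)).mul_left _))]
      have hterm : ∀ m ∈ Finset.range (n+1),
          (∑' s : ℕ, (mu j0 * gcpPmf k lam m (c:ℝ)) *
            (gcpPmf k lam (n-m) (s:ℝ) * gcpPmf k0 mu s t))
          = (mu j0 * gcpPmf k lam m (c:ℝ)) * igcpPmf k lam k0 mu (n-m) t := by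
        intro m _
        rw [tsum_mul_left, igcpPmf]
      rw [Finset.sum_congr rfl hterm, Finset.mul_sum]
      refine Finset.sum_congr rfl fun m _ => ?_
      rw [q_eq lam m (((j0:ℕ):ℝ)+1), gcp_eq, ← hcr, mul_comm ((c:ℕ):ℝ) (∑ j, lam j)]
      ring
    have EQ : (∑' s : ℕ, gcpPmf k lam n (s:ℝ) * Dfun k0 mu s t)
        = -(∑ j0 : Fin k0, mu j0) * igcpPmf k lam k0 mu n t +
          ∑ j0 : Fin k0, mu j0 * Real.exp (-(((j0 : ℕ) + 1 : ℝ) * ∑ j : Fin k, lam j)) *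
            ∑ m ∈ Finset.range (n + 1),
              (∑' x : Fin k → ℕ,
                if (∑ j : Fin k, ((j : ℕ) + 1) * x j) = m then
                  ∏ j : Fin k, (((j0 : ℕ) + 1 : ℝ) * lam j) ^ (x j) /
                    (Nat.factorial (x j))
                else 0) *
              igcpPmf k lam k0 mu (n - m) t := by
      rw [tsum_congr hDsplit, Summable.tsum_add ((SA n).mul_left _)
        (summable_sum (fun j0 _ => Sh j0)), tsum_mul_left,
        Summable.tsum_finsetSum (fun j0 (_ : j0 ∈ Finset.univ) => Sh j0)]
      rw [igcpPmf]
      congr 1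
      exact Finset.sum_congr rfl fun j0 _ => hper j0
    simp only [igcpPmf]
    exact EQ ▸ KEY
  · rw [igcpPmf]
    rw [tsum_eq_single 0 ?_]
    · rw [Nat.cast_zero, gcp_zero mu 0, if_pos rfl, mul_one, gcp_zero lam n]
    · intro s hs
      rw [gcp_zero mu s, if_neg hs, mul_zero]
end

section
/- For every m ∈ ℕ₀, Pr{Σ_{n=1}^{N} X_n = m} = p̂(m,t); that is, the IGCP at time t is equal in distribution to the compound GCP Σ_{n=1}^{M₀(t)} X_n formed by summing an M₀(t)-indexed random number of i.i.d. copies of M(1). -/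
open MeasureTheory ProbabilityTheory

open scoped ENNReal

noncomputable def pw (a : ℝ) (x : ℕ) : ℝ≥0∞ :=
  ENNReal.ofReal (a ^ x / (Nat.factorial x) * Real.exp (-a))

lemma tsum_pi_prod {β : Type*} : ∀ (k : ℕ) (g : Fin k → β → ℝ≥0∞),
    ∑' x : Fin k → β, ∏ j, g j (x j) = ∏ j, ∑' n, g j n := by
  intro k
  induction k with
  | zero =>
    intro g
    simp only [Finset.univ_eq_empty, Finset.prod_empty]
    exact tsum_eq_single default fun b hb => absurd (Subsingleton.elim b default) hb
  | succ k ih =>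
    intro g
    rw [← (Fin.consEquiv (fun _ => β)).tsum_eq]
    simp only [Fin.prod_univ_succ, Fin.cons_zero, Fin.cons_succ, Fin.consEquiv_apply]
    have h := ENNReal.tsum_prod (f := fun (a : β) (y : Fin k → β) => g 0 a * ∏ x : Fin k, g x.succ (y x))
    rw [h]
    calc ∑' (a : β) (y : Fin k → β), g 0 a * ∏ j : Fin k, g j.succ (y j)
        = ∑' (a : β), g 0 a * ∑' (y : Fin k → β), ∏ j : Fin k, g j.succ (y j) := by
          congr 1; funext a; rw [ENNReal.tsum_mul_left]
      _ = (∑' a, g 0 a) * ∏ j : Fin k, ∑' n, g j.succ n := by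
          rw [ENNReal.tsum_mul_right, ih]

lemma pw_sum (a : ℝ) (ha : 0 ≤ a) : ∑' x : ℕ, pw a x = ENNReal.ofReal (Real.exp a * Real.exp (-a)) := by
  unfold pw
  rw [← ENNReal.ofReal_tsum_of_nonneg]
  · congr 1
    rw [tsum_mul_right]
    congr 1
    rw [Real.exp_eq_exp_ℝ, NormedSpace.exp_eq_tsum_div]
  · intro n
    positivity
  · exact (Real.summable_pow_div_factorial a).mul_right _

lemma pw_sum_one (a : ℝ) (ha : 0 ≤ a) : ∑' x : ℕ, pw a x = 1 := by
  rw [pw_sum a ha, ← Real.exp_add, add_neg_cancel, Real.exp_zero, ENNReal.ofReal_one]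

lemma pw_ne_top (a : ℝ) (x : ℕ) : pw a x ≠ ⊤ := ENNReal.ofReal_ne_top

lemma pw_conv (a b : ℝ) (ha : 0 ≤ a) (hb : 0 ≤ b) (x : ℕ) :
    ∑ p ∈ Finset.HasAntidiagonal.antidiagonal x, pw a p.1 * pw b p.2 = pw (a + b) x := by
  have h1 : ∀ p ∈ Finset.HasAntidiagonal.antidiagonal x,
      pw a p.1 * pw b p.2 =
        ENNReal.ofReal ((a ^ p.1 / (Nat.factorial p.1) * Real.exp (-a)) *
          (b ^ p.2 / (Nat.factorial p.2) * Real.exp (-b))) := by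
    intro p _
    unfold pw
    rw [← ENNReal.ofReal_mul (by positivity)]
  rw [Finset.sum_congr rfl h1, ← ENNReal.ofReal_sum_of_nonneg (by intro p _; positivity)]
  unfold pw
  congr 1
  rw [Finset.Nat.sum_antidiagonal_eq_sum_range_succ
    (fun i j => a ^ i / (Nat.factorial i) * Real.exp (-a) * (b ^ j / (Nat.factorial j) * Real.exp (-b)))]
  have key : (a + b) ^ x = ∑ i ∈ Finset.range (x + 1), a ^ i * b ^ (x - i) * (x.choose i) :=
    add_pow a b x
  rw [neg_add, Real.exp_add, show x + 1 = x.succ from rfl] at *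
  rw [show (a + b) ^ x / (Nat.factorial x) * (Real.exp (-a) * Real.exp (-b))
      = (∑ i ∈ Finset.range x.succ, a ^ i * b ^ (x - i) * (x.choose i)) / (Nat.factorial x)
        * (Real.exp (-a) * Real.exp (-b)) from by rw [← key]]
  rw [Finset.sum_div, Finset.sum_mul]
  refine Finset.sum_congr rfl fun i hi => ?_
  have hix : i ≤ x := Nat.lt_succ_iff.mp (Finset.mem_range.mp hi)
  have hfact : (x.choose i : ℝ) * (Nat.factorial i) * (Nat.factorial (x - i)) = Nat.factorial x := by
    exact_mod_cast congrArg (Nat.cast : ℕ → ℝ) (Nat.choose_mul_factorial_mul_factorial hix)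
  have hi0 : (Nat.factorial i : ℝ) ≠ 0 := by positivity
  have hx0 : (Nat.factorial x : ℝ) ≠ 0 := by positivity
  have hxi0 : (Nat.factorial (x - i) : ℝ) ≠ 0 := by positivity
  field_simp
  rw [← hfact]; ring

noncomputable def gcpE (k : ℕ) (lam : Fin k → ℝ) (n : ℕ) (t : ℝ) : ℝ≥0∞ :=
  ∑' x : Fin k → ℕ,
    if (∑ j : Fin k, ((j : ℕ) + 1) * x j) = n then ∏ j, pw (lam j * t) (x j) else 0

lemma gcpE_total (k : ℕ) (lam : Fin k → ℝ) (t : ℝ) (ht : 0 ≤ t) (hlam : ∀ j, 0 ≤ lam j) :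
    ∑' n : ℕ, gcpE k lam n t = 1 := by
  unfold gcpE
  rw [ENNReal.tsum_comm]
  have h1 : ∀ x : Fin k → ℕ,
      (∑' n : ℕ, if (∑ j : Fin k, ((j : ℕ) + 1) * x j) = n then ∏ j, pw (lam j * t) (x j) else 0)
        = ∏ j, pw (lam j * t) (x j) := by
    intro x
    rw [tsum_eq_single (∑ j : Fin k, ((j : ℕ) + 1) * x j)]
    · rw [if_pos rfl]
    · intro n hn
      exact if_neg fun h => hn h.symm
  calc ∑' (x : Fin k → ℕ), ∑' (n : ℕ), _ = ∑' x : Fin k → ℕ, ∏ j, pw (lam j * t) (x j) :=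
        tsum_congr h1
    _ = ∏ j, ∑' n : ℕ, pw (lam j * t) n := tsum_pi_prod k _
    _ = 1 := by
        rw [Finset.prod_congr rfl fun j _ => pw_sum_one (lam j * t) (mul_nonneg (hlam j) ht)]
        simp

lemma gcpE_le_one (k : ℕ) (lam : Fin k → ℝ) (n : ℕ) (t : ℝ) (ht : 0 ≤ t)
    (hlam : ∀ j, 0 ≤ lam j) : gcpE k lam n t ≤ 1 := by
  rw [← gcpE_total k lam t ht hlam]
  exact ENNReal.le_tsum n

lemma pw_zero (y : ℕ) : pw 0 y = if y = 0 then 1 else 0 := by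
  cases y with
  | zero => simp [pw]
  | succ y => simp [pw, zero_pow]

lemma gcpE_zero (k : ℕ) (lam : Fin k → ℝ) (n : ℕ) :
    gcpE k lam n 0 = if n = 0 then 1 else 0 := by
  unfold gcpE
  have hpw : ∀ j : Fin k, ∀ y : ℕ, pw (lam j * 0) y = if y = 0 then 1 else 0 := by
    intro j y; rw [mul_zero, pw_zero]
  rw [tsum_eq_single (0 : Fin k → ℕ)]
  · simp [pw_zero, eq_comm]
  · intro x hx
    obtain ⟨j, hj⟩ : ∃ j, x j ≠ 0 := by
      by_contra h
      push_neg at h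
      exact hx (funext h)
    have : (∏ j, pw (lam j * 0) (x j)) = 0 := by
      apply Finset.prod_eq_zero (Finset.mem_univ j)
      rw [hpw j, if_neg hj]
    rw [this, ite_self]

lemma antidiag_ite (A B : ℝ≥0∞) (a b m : ℕ) :
    ∑ p ∈ Finset.HasAntidiagonal.antidiagonal m, (if a = p.1 then A else 0) * (if b = p.2 then B else 0)
      = if a + b = m then A * B else 0 := by
  by_cases h : a + b = m
  · rw [if_pos h, Finset.sum_eq_single (a, b)]
    · simp
    · intro p hp hne
      by_cases h1 : a = p.1
      · by_cases h2 : b = p.2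
        · exact absurd (by rw [Prod.ext_iff]; exact ⟨h1.symm, h2.symm⟩ : p = (a, b)) hne
        · simp [h2]
      · simp [h1]
    · intro hmem
      exact absurd (Finset.HasAntidiagonal.mem_antidiagonal.mpr h) hmem
  · rw [if_neg h]
    apply Finset.sum_eq_zero
    intro p hp
    by_cases h1 : a = p.1
    · by_cases h2 : b = p.2
      · exfalso; apply h; rw [h1, h2]; exact Finset.HasAntidiagonal.mem_antidiagonal.mp hp
      · simp [h2]
    · simp [h1]

lemma pair_prod_eq (k : ℕ) (H : Fin k → ℕ → ℕ → ℝ≥0∞) :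
    (∑' x : Fin k → ℕ, ∑' y : Fin k → ℕ, ∏ j, H j (x j) (y j))
      = ∏ j, ∑' p : ℕ × ℕ, H j p.1 p.2 := by
  have hp := ENNReal.tsum_prod (f := fun (x y : Fin k → ℕ) => ∏ j, H j (x j) (y j))
  rw [← hp]
  rw [← (Equiv.arrowProdEquivProdArrow (Fin k) (fun _ => ℕ) (fun _ => ℕ)).tsum_eq
    (fun p : (Fin k → ℕ) × (Fin k → ℕ) => ∏ j, H j (p.1 j) (p.2 j))]
  have h1 : ∀ c : Fin k → ℕ × ℕ,
      (∏ j, H j (((Equiv.arrowProdEquivProdArrow (Fin k) (fun _ => ℕ) (fun _ => ℕ)) c).1 j)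
        (((Equiv.arrowProdEquivProdArrow (Fin k) (fun _ => ℕ) (fun _ => ℕ)) c).2 j))
        = ∏ j, (fun j (p : ℕ × ℕ) => H j p.1 p.2) j (c j) := fun c => rfl
  rw [tsum_congr h1, tsum_pi_prod k (fun j (p : ℕ × ℕ) => H j p.1 p.2)]

lemma gcpE_conv (k : ℕ) (lam : Fin k → ℝ) (hlam : ∀ j, 0 ≤ lam j) (s u : ℝ)
    (hs : 0 ≤ s) (hu : 0 ≤ u) (m : ℕ) :
    ∑ p ∈ Finset.HasAntidiagonal.antidiagonal m, gcpE k lam p.1 s * gcpE k lam p.2 u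
      = gcpE k lam m (s + u) := by
  classical
  have stepA : ∀ a b : ℕ, gcpE k lam a s * gcpE k lam b u
      = ∑' x : Fin k → ℕ, ∑' y : Fin k → ℕ,
          (if (∑ j : Fin k, ((j : ℕ) + 1) * x j) = a then ∏ j, pw (lam j * s) (x j) else 0)
            * (if (∑ j : Fin k, ((j : ℕ) + 1) * y j) = b then ∏ j, pw (lam j * u) (y j) else 0) := by
    intro a b
    unfold gcpE
    rw [← ENNReal.tsum_mul_right]
    exact tsum_congr fun x => by rw [← ENNReal.tsum_mul_left]
  rw [Finset.sum_congr rfl (fun p _ => stepA p.1 p.2), ← Summable.tsum_finsetSum (fun p _ => ENNReal.summable)]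
  rw [tsum_congr (fun x => (Summable.tsum_finsetSum (fun p _ => ENNReal.summable)).symm)]
  rw [tsum_congr (fun x => tsum_congr fun y => antidiag_ite _ _ _ _ m)]
  -- now: ∑' x, ∑' y, if w x + w y = m then F x * G y else 0 = gcpE k lam m (s+u)
  have key : ∀ x y : Fin k → ℕ,
      (if (∑ j : Fin k, ((j : ℕ) + 1) * x j) + (∑ j : Fin k, ((j : ℕ) + 1) * y j) = m then
          (∏ j, pw (lam j * s) (x j)) * ∏ j, pw (lam j * u) (y j) else 0)
      = ∑' z : Fin k → ℕ,
          if z = x + y then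
            (if (∑ j : Fin k, ((j : ℕ) + 1) * z j) = m then
              (∏ j, pw (lam j * s) (x j)) * ∏ j, pw (lam j * u) (y j) else 0)
          else 0 := by
    intro x y
    rw [tsum_eq_single (x + y) (fun z hz => if_neg hz), if_pos rfl]
    have hww : (∑ j : Fin k, ((j : ℕ) + 1) * (x + y) j)
        = (∑ j : Fin k, ((j : ℕ) + 1) * x j) + (∑ j : Fin k, ((j : ℕ) + 1) * y j) := by
      rw [← Finset.sum_add_distrib]
      exact Finset.sum_congr rfl fun j _ => by simp [Pi.add_apply, mul_add]
    rw [hww]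
  rw [tsum_congr (fun x => tsum_congr fun y => key x y)]
  rw [tsum_congr (fun x => ENNReal.tsum_comm), ENNReal.tsum_comm]
  -- now: ∑' z, ∑' x, ∑' y, if z = x + y then (if w z = m then F x * G y else 0) else 0
  unfold gcpE
  refine tsum_congr fun z => ?_
  by_cases hz : (∑ j : Fin k, ((j : ℕ) + 1) * z j) = m
  · simp only [hz, if_true]
    have h2 : ∀ x y : Fin k → ℕ,
        (if z = x + y then (∏ j, pw (lam j * s) (x j)) * ∏ j, pw (lam j * u) (y j) else 0)
          = ∏ j, (if x j + y j = z j then pw (lam j * s) (x j) * pw (lam j * u) (y j) else 0) := by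
      intro x y
      by_cases h : x + y = z
      · rw [if_pos h.symm, ← Finset.prod_mul_distrib]
        exact Finset.prod_congr rfl fun j _ =>
          (if_pos (by rw [← h]; rfl)).symm
      · obtain ⟨j, hj⟩ : ∃ j, x j + y j ≠ z j := by
          by_contra hc; push_neg at hc; exact h (funext hc)
        rw [if_neg (fun hh => h hh.symm)]
        refine (Finset.prod_eq_zero (Finset.mem_univ j) ?_).symm
        rw [if_neg hj]
    rw [tsum_congr (fun x => tsum_congr fun y => h2 x y)]
    rw [pair_prod_eq k (fun j a b => if a + b = z j then pw (lam j * s) a * pw (lam j * u) b else 0)]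
    refine Finset.prod_congr rfl fun j _ => ?_
    rw [tsum_eq_sum (s := Finset.HasAntidiagonal.antidiagonal (z j))
      (fun p hp => if_neg (fun h => hp (Finset.HasAntidiagonal.mem_antidiagonal.mpr h)))]
    rw [Finset.sum_congr rfl (fun p hp => if_pos (Finset.HasAntidiagonal.mem_antidiagonal.mp hp))]
    rw [pw_conv (lam j * s) (lam j * u) (mul_nonneg (hlam j) hs) (mul_nonneg (hlam j) hu) (z j)]
    rw [← mul_add]
  · simp only [hz, if_false]
    simp

lemma gcpE_ne_top (k : ℕ) (lam : Fin k → ℝ) (n : ℕ) (t : ℝ) (ht : 0 ≤ t)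
    (hlam : ∀ j, 0 ≤ lam j) : gcpE k lam n t ≠ ⊤ :=
  ne_top_of_le_ne_top ENNReal.one_ne_top (gcpE_le_one k lam n t ht hlam)

lemma gcpPmf_eq_toReal (k : ℕ) (lam : Fin k → ℝ) (n : ℕ) (t : ℝ) (ht : 0 ≤ t)
    (hlam : ∀ j, 0 ≤ lam j) : gcpPmf k lam n t = (gcpE k lam n t).toReal := by
  unfold gcpPmf gcpE
  rw [ENNReal.tsum_toReal_eq]
  · refine tsum_congr fun x => ?_
    by_cases h : (∑ j : Fin k, ((j : ℕ) + 1) * x j) = n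
    · rw [if_pos h, if_pos h, ENNReal.toReal_prod]
      refine Finset.prod_congr rfl fun j _ => ?_
      unfold pw
      rw [ENNReal.toReal_ofReal (mul_nonneg (div_nonneg
        (pow_nonneg (mul_nonneg (hlam j) ht) _) (Nat.cast_nonneg _)) (Real.exp_pos _).le)]
    · rw [if_neg h, if_neg h]; simp
  · intro x
    by_cases h : (∑ j : Fin k, ((j : ℕ) + 1) * x j) = n
    · rw [if_pos h]
      exact ENNReal.prod_ne_top fun j _ => pw_ne_top _ _
    · rw [if_neg h]; exact ENNReal.zero_ne_top

lemma ofReal_gcpPmf (k : ℕ) (lam : Fin k → ℝ) (n : ℕ) (t : ℝ) (ht : 0 ≤ t)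
    (hlam : ∀ j, 0 ≤ lam j) : ENNReal.ofReal (gcpPmf k lam n t) = gcpE k lam n t := by
  rw [gcpPmf_eq_toReal k lam n t ht hlam, ENNReal.ofReal_toReal (gcpE_ne_top k lam n t ht hlam)]

lemma ofReal_igcpPmf (k : ℕ) (lam : Fin k → ℝ) (k0 : ℕ) (mu : Fin k0 → ℝ)
    (m : ℕ) (t : ℝ) (ht : 0 ≤ t) (hlam : ∀ j, 0 ≤ lam j) (hmu : ∀ j, 0 ≤ mu j) :
    ENNReal.ofReal (igcpPmf k lam k0 mu m t)
      = ∑' s : ℕ, gcpE k lam m s * gcpE k0 mu s t := by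
  unfold igcpPmf
  have hterm : ∀ s : ℕ, gcpPmf k lam m s * gcpPmf k0 mu s t
      = (gcpE k lam m (s : ℝ) * gcpE k0 mu s t).toReal := by
    intro s
    rw [ENNReal.toReal_mul, gcpPmf_eq_toReal k lam m s (Nat.cast_nonneg s) hlam,
      gcpPmf_eq_toReal k0 mu s t ht hmu]
  have hne : ∀ s : ℕ, gcpE k lam m (s : ℝ) * gcpE k0 mu s t ≠ ⊤ := fun s =>
    ENNReal.mul_ne_top (gcpE_ne_top k lam m s (Nat.cast_nonneg s) hlam)
      (gcpE_ne_top k0 mu s t ht hmu)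
  have hfin : (∑' s : ℕ, gcpE k lam m (s : ℝ) * gcpE k0 mu s t) ≠ ⊤ := by
    refine ne_top_of_le_ne_top ENNReal.one_ne_top ?_
    calc ∑' s : ℕ, gcpE k lam m (s : ℝ) * gcpE k0 mu s t
        ≤ ∑' s : ℕ, 1 * gcpE k0 mu s t :=
          Summable.tsum_le_tsum (fun s => mul_le_mul_left
            (gcpE_le_one k lam m s (Nat.cast_nonneg s) hlam) _)
            ENNReal.summable ENNReal.summable
      _ = 1 := by
          simp only [one_mul]
          exact gcpE_total k0 mu t ht hmu
  rw [tsum_congr hterm, ← ENNReal.tsum_toReal_eq hne, ENNReal.ofReal_toReal hfin]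

/-- the IGCP at time `t` is equal in distribution to the compound GCP
`∑_{n=1}^{N} X_n`, where the `X_n` are i.i.d. copies of `M(1)` and `N` is distributed
as the time-changing GCP at time `t`, independent of the sequence `(X_n)`. -/
theorem igcp_compound_rep {Ω : Type*} [MeasurableSpace Ω] (P : Measure Ω)
    [IsProbabilityMeasure P]
    (k : ℕ) (hk : 0 < k) (lam : Fin k → ℝ) (hlam : ∀ j, 0 < lam j)
    (k0 : ℕ) (hk0 : 0 < k0) (mu : Fin k0 → ℝ) (hmu : ∀ j0, 0 < mu j0)
    (t : ℝ) (ht : 0 ≤ t)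
    (X : ℕ → Ω → ℕ) (N : Ω → ℕ)
    (hXmeas : ∀ n, Measurable (X n)) (hNmeas : Measurable N)
    (hXdist : ∀ n : ℕ, ∀ m : ℕ, P {ω | X n ω = m} = ENNReal.ofReal (gcpPmf k lam m 1))
    (hNdist : ∀ s : ℕ, P {ω | N ω = s} = ENNReal.ofReal (gcpPmf k0 mu s t))
    (hindep : iIndepFun
      (fun o : Option ℕ => o.elim N X) P) :
    ∀ m : ℕ, P {ω | (∑ n ∈ Finset.range (N ω), X n ω) = m} =
      ENNReal.ofReal (igcpPmf k lam k0 mu m t) := by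

  have hlam' : ∀ j, 0 ≤ lam j := fun j => (hlam j).le
  have hmu' : ∀ j, 0 ≤ mu j := fun j => (hmu j).le
  set S : ℕ → Ω → ℕ := fun s ω => ∑ n ∈ Finset.range s, X n ω with hS
  have hSmeas : ∀ s, Measurable (S s) := fun s =>
    Finset.measurable_sum _ fun n _ => hXmeas n
  have hf : ∀ o : Option ℕ, Measurable ((fun o : Option ℕ => o.elim N X) o) := by
    rintro (_ | n)
    · exact hNmeas
    · exact hXmeas n
  have hsum_image : ∀ s : ℕ,
      (∑ j ∈ (Finset.range s).image some, (fun o : Option ℕ => o.elim N X) j) = S s := by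
    intro s
    rw [Finset.sum_image (fun a _ b _ h => Option.some.inj h)]
    funext ω
    rw [hS]
    simp [Finset.sum_apply]
  -- distribution of partial sums
  have hSdist : ∀ s m' : ℕ, P {ω | S s ω = m'} = gcpE k lam m' s := by
    intro s
    induction s with
    | zero =>
      intro m'
      have hg : gcpE k lam m' ((0 : ℕ) : ℝ) = if m' = 0 then 1 else 0 := by
        rw [Nat.cast_zero, gcpE_zero]
      by_cases hm : m' = 0
      · subst hm
        have : {ω : Ω | S 0 ω = 0} = Set.univ := by
          ext ω; simp [hS]
        rw [this, hg, if_pos rfl, measure_univ]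
      · have : {ω : Ω | S 0 ω = m'} = ∅ := by
          ext ω
          simp only [hS, Finset.range_zero, Finset.sum_empty, Set.mem_setOf_eq,
            Set.mem_empty_iff_false, iff_false]
          exact fun h => hm h.symm
        rw [this, hg, if_neg hm, measure_empty]
    | succ s ih =>
      intro m'
      have hset : {ω | S (s + 1) ω = m'}
          = ⋃ p ∈ Finset.HasAntidiagonal.antidiagonal m', ({ω | S s ω = p.1} ∩ {ω | X s ω = p.2}) := by
        ext ω
        simp only [Set.mem_setOf_eq, Set.mem_iUnion, Set.mem_inter_iff, exists_prop]
        constructor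
        · intro h
          refine ⟨(S s ω, X s ω), Finset.HasAntidiagonal.mem_antidiagonal.mpr ?_, rfl, rfl⟩
          rw [← h, hS]
          exact (Finset.sum_range_succ _ _).symm
        · rintro ⟨p, hp, h1, h2⟩
          have : S (s + 1) ω = S s ω + X s ω := by
            rw [hS]; exact Finset.sum_range_succ _ _
          rw [this, h1, h2]
          exact Finset.HasAntidiagonal.mem_antidiagonal.mp hp
      have hindepS : IndepFun (S s) (X s) P := by
        have h := hindep.indepFun_finsetSum_of_notMem hf
          (s := (Finset.range s).image some) (i := some s)
          (by simp)
        rwa [hsum_image s] at h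
      have hterm : ∀ p ∈ Finset.HasAntidiagonal.antidiagonal m',
          P ({ω | S s ω = p.1} ∩ {ω | X s ω = p.2})
            = gcpE k lam p.1 s * gcpE k lam p.2 1 := by
        intro p _
        have h := hindepS.measure_inter_preimage_eq_mul {p.1} {p.2}
          (measurableSet_singleton _) (measurableSet_singleton _)
        have e1 : S s ⁻¹' {p.1} = {ω | S s ω = p.1} := rfl
        have e2 : X s ⁻¹' {p.2} = {ω | X s ω = p.2} := rfl
        rw [e1, e2] at h
        rw [h, ih p.1, hXdist s p.2, ofReal_gcpPmf k lam p.2 1 zero_le_one hlam']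
      have hdisj : Set.PairwiseDisjoint (↑(Finset.HasAntidiagonal.antidiagonal m'))
          (fun p : ℕ × ℕ => ({ω | S s ω = p.1} ∩ {ω | X s ω = p.2})) := by
        intro p hp q hq hne
        refine Set.disjoint_left.mpr ?_
        rintro ω ⟨h1, h2⟩ ⟨h3, h4⟩
        exact hne (Prod.ext (h1.symm.trans h3) (h2.symm.trans h4))
      have hms : ∀ p ∈ Finset.HasAntidiagonal.antidiagonal m',
          MeasurableSet ({ω | S s ω = p.1} ∩ {ω | X s ω = p.2}) := by
        intro p _
        exact ((hSmeas s) (measurableSet_singleton p.1)).inter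
          ((hXmeas s) (measurableSet_singleton p.2))
      rw [hset, measure_biUnion_finset hdisj hms, Finset.sum_congr rfl hterm]
      have := gcpE_conv k lam hlam' (s : ℝ) 1 (Nat.cast_nonneg s) zero_le_one m'
      rw [this]
      norm_num
  -- main decomposition
  intro m
  have hsetN : {ω | (∑ n ∈ Finset.range (N ω), X n ω) = m}
      = ⋃ s : ℕ, ({ω | N ω = s} ∩ {ω | S s ω = m}) := by
    ext ω
    simp only [Set.mem_setOf_eq, Set.mem_iUnion, Set.mem_inter_iff]
    constructor
    · intro h
      exact ⟨N ω, rfl, h⟩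
    · rintro ⟨s, h1, h2⟩
      rw [hS] at h2
      rw [← h1] at h2
      exact h2
  have hdisjN : Pairwise (Function.onFun Disjoint
      fun s : ℕ => ({ω | N ω = s} ∩ {ω | S s ω = m})) := by
    intro s s' hne
    refine Set.disjoint_left.mpr ?_
    rintro ω ⟨h1, _⟩ ⟨h3, _⟩
    exact hne (h1.symm.trans h3)
  have hmsN : ∀ s : ℕ, MeasurableSet ({ω | N ω = s} ∩ {ω | S s ω = m}) := fun s =>
    (hNmeas (measurableSet_singleton s)).inter ((hSmeas s) (measurableSet_singleton m))
  rw [hsetN, measure_iUnion hdisjN hmsN]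
  have hterm : ∀ s : ℕ, P ({ω | N ω = s} ∩ {ω | S s ω = m})
      = gcpE k lam m s * gcpE k0 mu s t := by
    intro s
    have hindepN : IndepFun N (S s) P := by
      have h := hindep.indepFun_finsetSum_of_notMem hf
        (s := (Finset.range s).image some) (i := none)
        (by simp)
      rw [hsum_image s] at h
      exact h.symm
    have h := hindepN.measure_inter_preimage_eq_mul {s} {m}
      (measurableSet_singleton _) (measurableSet_singleton _)
    have e1 : N ⁻¹' {s} = {ω | N ω = s} := rfl
    have e2 : S s ⁻¹' {m} = {ω | S s ω = m} := rfl
    rw [e1, e2] at h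
    rw [h, hNdist s, hSdist s m, ofReal_gcpPmf k0 mu s t ht hmu', mul_comm]
  rw [tsum_congr hterm, ofReal_igcpPmf k lam k0 mu m t ht hlam' hmu']
end

section
/- For every t ≥ 0, the mean of the IGCP satisfies Σ_{n=0}^∞ n·p̂(n,t) = S·t, and its variance satisfies Σ_{n=0}^∞ n²·p̂(n,t) − (S·t)² = T·t; in particular, for t > 0 the variance strictly exceeds the mean (the IGCP is overdispersed). -/
open scoped ENNReal

namespace IGCPAux

noncomputable def pois (r : ℝ) (n : ℕ) : ℝ := r ^ n / n.factorial * Real.exp (-r)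

lemma exp_tsum (r : ℝ) : ∑' n : ℕ, r ^ n / n.factorial = Real.exp r := by
  rw [Real.exp_eq_exp_ℝ, NormedSpace.exp_eq_tsum_div]

lemma summable_exp (r : ℝ) : Summable (fun n : ℕ => r ^ n / n.factorial) :=
  Real.summable_pow_div_factorial r

lemma summable_mean (r : ℝ) : Summable (fun n : ℕ => (n : ℝ) * (r ^ n / n.factorial)) := by
  rw [← summable_nat_add_iff 1]
  have : (fun n : ℕ => ((n + 1 : ℕ) : ℝ) * (r ^ (n + 1) / (n + 1).factorial))
      = fun n : ℕ => r * (r ^ n / n.factorial) := by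
    funext n
    rw [Nat.factorial_succ, pow_succ]
    push_cast [Nat.factorial_ne_zero]
    field_simp
  rw [this]
  exact (summable_exp r).mul_left r

lemma tsum_mean (r : ℝ) : ∑' n : ℕ, (n : ℝ) * (r ^ n / n.factorial) = r * Real.exp r := by
  rw [Summable.tsum_eq_zero_add (summable_mean r)]
  have : (fun n : ℕ => ((n + 1 : ℕ) : ℝ) * (r ^ (n + 1) / (n + 1).factorial))
      = fun n : ℕ => r * (r ^ n / n.factorial) := by
    funext n
    rw [Nat.factorial_succ, pow_succ]
    push_cast [Nat.factorial_ne_zero]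
    field_simp
  simp only [Nat.cast_zero, zero_mul, zero_add]
  rw [this, tsum_mul_left, exp_tsum]

lemma succ_sq_eq (r : ℝ) : (fun n : ℕ => (((n + 1 : ℕ)) : ℝ) ^ 2 * (r ^ (n + 1) / (n + 1).factorial))
    = fun n : ℕ => r * ((n : ℝ) * (r ^ n / n.factorial)) + r * (r ^ n / n.factorial) := by
  funext n
  rw [Nat.factorial_succ, pow_succ]
  push_cast [Nat.factorial_ne_zero]
  field_simp
  ring

lemma summable_sq (r : ℝ) : Summable (fun n : ℕ => (n : ℝ) ^ 2 * (r ^ n / n.factorial)) := by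
  rw [← summable_nat_add_iff 1]
  rw [succ_sq_eq r]
  exact (((summable_mean r).mul_left r).add ((summable_exp r).mul_left r))

lemma tsum_sq (r : ℝ) :
    ∑' n : ℕ, (n : ℝ) ^ 2 * (r ^ n / n.factorial) = (r ^ 2 + r) * Real.exp r := by
  rw [Summable.tsum_eq_zero_add (summable_sq r)]
  simp only [Nat.cast_zero, zero_pow, zero_mul, zero_add, ne_eq, OfNat.ofNat_ne_zero,
    not_false_iff]
  rw [succ_sq_eq r, Summable.tsum_add (((summable_mean r).mul_left r)) (((summable_exp r).mul_left r)),
    tsum_mul_left, tsum_mul_left, tsum_mean, exp_tsum]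
  ring

lemma pois_nonneg {r : ℝ} (hr : 0 ≤ r) (n : ℕ) : 0 ≤ pois r n := by
  unfold pois
  positivity

lemma summable_pois (r : ℝ) : Summable (pois r) :=
  (summable_exp r).mul_right _

lemma tsum_pois {r : ℝ} : ∑' n : ℕ, pois r n = 1 := by
  unfold pois
  rw [tsum_mul_right, exp_tsum, ← Real.exp_add, add_neg_cancel, Real.exp_zero]

lemma summable_mul_pois (r : ℝ) : Summable (fun n : ℕ => (n : ℝ) * pois r n) := by
  unfold pois
  simpa only [mul_assoc] using (summable_mean r).mul_right (Real.exp (-r))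

lemma tsum_mul_pois {r : ℝ} : ∑' n : ℕ, (n : ℝ) * pois r n = r := by
  unfold pois
  simp only [← mul_assoc]
  rw [tsum_mul_right, tsum_mean, mul_assoc, ← Real.exp_add, add_neg_cancel, Real.exp_zero, mul_one]

lemma summable_sq_pois (r : ℝ) : Summable (fun n : ℕ => (n : ℝ) ^ 2 * pois r n) := by
  unfold pois
  simpa only [mul_assoc] using (summable_sq r).mul_right (Real.exp (-r))

lemma tsum_sq_pois {r : ℝ} : ∑' n : ℕ, (n : ℝ) ^ 2 * pois r n = r ^ 2 + r := by
  unfold pois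
  simp only [← mul_assoc]
  rw [tsum_mul_right, tsum_sq, mul_assoc, ← Real.exp_add, add_neg_cancel, Real.exp_zero, mul_one]

noncomputable def qe (r : ℝ) (n : ℕ) : ℝ≥0∞ := ENNReal.ofReal (pois r n)

lemma qe_tsum {r : ℝ} (hr : 0 ≤ r) : ∑' n : ℕ, qe r n = 1 := by
  unfold qe
  rw [← ENNReal.ofReal_tsum_of_nonneg (pois_nonneg hr) (summable_pois r), tsum_pois,
    ENNReal.ofReal_one]

lemma qe_mean {r : ℝ} (hr : 0 ≤ r) : ∑' n : ℕ, (n : ℝ≥0∞) * qe r n = ENNReal.ofReal r := by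
  unfold qe
  have : ∀ n : ℕ, (n : ℝ≥0∞) * ENNReal.ofReal (pois r n) = ENNReal.ofReal ((n : ℝ) * pois r n) := by
    intro n
    rw [ENNReal.ofReal_mul (by positivity), ENNReal.ofReal_natCast]
  simp only [this]
  rw [← ENNReal.ofReal_tsum_of_nonneg (fun n => mul_nonneg (by positivity) (pois_nonneg hr n))
    (summable_mul_pois r), tsum_mul_pois]

lemma qe_sq {r : ℝ} (hr : 0 ≤ r) :
    ∑' n : ℕ, (n : ℝ≥0∞) ^ 2 * qe r n = ENNReal.ofReal (r ^ 2 + r) := by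
  unfold qe
  have : ∀ n : ℕ, (n : ℝ≥0∞) ^ 2 * ENNReal.ofReal (pois r n)
      = ENNReal.ofReal ((n : ℝ) ^ 2 * pois r n) := by
    intro n
    rw [ENNReal.ofReal_mul (by positivity), ENNReal.ofReal_pow (by positivity),
      ENNReal.ofReal_natCast]
  simp only [this]
  rw [← ENNReal.ofReal_tsum_of_nonneg (fun n => mul_nonneg (by positivity) (pois_nonneg hr n))
    (summable_sq_pois r), tsum_sq_pois]

lemma tsum_pi_prod : ∀ {k : ℕ} (g : Fin k → ℕ → ℝ≥0∞),
    ∑' x : Fin k → ℕ, ∏ j, g j (x j) = ∏ j, ∑' n, g j n := by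
  intro k
  induction k with
  | zero =>
    intro g
    simp only [Finset.univ_eq_empty, Finset.prod_empty]
    exact tsum_eq_single (fun i => 0) (fun x hx => absurd (funext fun i => i.elim0) hx) |>.trans rfl
  | succ k ih =>
    intro g
    rw [← (Fin.consEquiv (fun _ : Fin (k+1) => ℕ)).tsum_eq, ENNReal.tsum_prod']
    simp only [Fin.consEquiv_apply, Fin.prod_univ_succ, Fin.cons_zero, Fin.cons_succ]
    calc ∑' (a : ℕ), ∑' (y : Fin k → ℕ), g 0 a * ∏ j : Fin k, g j.succ (y j)
        = ∑' (a : ℕ), g 0 a * ∑' (y : Fin k → ℕ), ∏ j : Fin k, g j.succ (y j) := by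
          simp only [ENNReal.tsum_mul_left]
      _ = (∑' a : ℕ, g 0 a) * ∑' (y : Fin k → ℕ), ∏ j : Fin k, g j.succ (y j) := by
          rw [ENNReal.tsum_mul_right]
      _ = (∑' a : ℕ, g 0 a) * ∏ j : Fin k, ∑' n, g j.succ n := by rw [ih]

lemma tsum_pi_prod_mul {k : ℕ} (h g : Fin k → ℕ → ℝ≥0∞) :
    ∑' x : Fin k → ℕ, (∏ j, h j (x j)) * ∏ j, g j (x j) = ∏ j, ∑' n, h j n * g j n := by
  simp only [← Finset.prod_mul_distrib]
  exact tsum_pi_prod (fun j n => h j n * g j n)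

lemma E_coord {k : ℕ} (q : Fin k → ℕ → ℝ≥0∞) (hq : ∀ i, ∑' n, q i n = 1) (j : Fin k) (m : ℕ) :
    ∑' x : Fin k → ℕ, (x j : ℝ≥0∞) ^ m * ∏ i, q i (x i) = ∑' n : ℕ, (n : ℝ≥0∞) ^ m * q j n := by
  have key : ∀ x : Fin k → ℕ, (x j : ℝ≥0∞) ^ m
      = ∏ i, (if i = j then ((x i : ℝ≥0∞)) ^ m else 1) := by
    intro x
    rw [Finset.prod_ite_eq' Finset.univ j (fun i => ((x i : ℝ≥0∞)) ^ m)]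
    simp
  calc ∑' x : Fin k → ℕ, (x j : ℝ≥0∞) ^ m * ∏ i, q i (x i)
      = ∑' x : Fin k → ℕ, (∏ i, (if i = j then ((x i : ℝ≥0∞)) ^ m else 1)) * ∏ i, q i (x i) := by
        simp only [← key]
    _ = ∏ i, ∑' n : ℕ, (if i = j then ((n : ℕ) : ℝ≥0∞) ^ m else 1) * q i n :=
        tsum_pi_prod_mul (fun i n => if i = j then ((n : ℕ) : ℝ≥0∞) ^ m else 1) q
    _ = ∑' n : ℕ, (n : ℝ≥0∞) ^ m * q j n := by
        rw [Finset.prod_eq_single j]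
        · simp
        · intro i _ hij
          simp [hij, hq i]
        · simp

lemma E_pair {k : ℕ} (q : Fin k → ℕ → ℝ≥0∞) (hq : ∀ i, ∑' n, q i n = 1) {i j : Fin k}
    (hij : i ≠ j) :
    ∑' x : Fin k → ℕ, (x i : ℝ≥0∞) * (x j : ℝ≥0∞) * ∏ l, q l (x l)
      = (∑' n : ℕ, (n : ℝ≥0∞) * q i n) * (∑' n : ℕ, (n : ℝ≥0∞) * q j n) := by
  have key : ∀ x : Fin k → ℕ, (x i : ℝ≥0∞) * (x j : ℝ≥0∞)
      = ∏ l, ((if l = i then ((x l : ℝ≥0∞)) else 1) * (if l = j then ((x l : ℝ≥0∞)) else 1)) := by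
    intro x
    rw [Finset.prod_mul_distrib, Finset.prod_ite_eq' Finset.univ i (fun l => ((x l : ℝ≥0∞))),
      Finset.prod_ite_eq' Finset.univ j (fun l => ((x l : ℝ≥0∞)))]
    simp
  calc ∑' x : Fin k → ℕ, (x i : ℝ≥0∞) * (x j : ℝ≥0∞) * ∏ l, q l (x l)
      = ∑' x : Fin k → ℕ,
          (∏ l, ((if l = i then ((x l : ℝ≥0∞)) else 1) * (if l = j then ((x l : ℝ≥0∞)) else 1)))
            * ∏ l, q l (x l) := by simp only [← key]
    _ = ∏ l, ∑' n : ℕ, ((if l = i then ((n : ℕ) : ℝ≥0∞) else 1) * (if l = j then ((n : ℕ) : ℝ≥0∞) else 1))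
            * q l n :=
        tsum_pi_prod_mul
          (fun l n => (if l = i then ((n : ℕ) : ℝ≥0∞) else 1) * (if l = j then ((n : ℕ) : ℝ≥0∞) else 1)) q
    _ = _ := by
        rw [← Finset.prod_subset (Finset.subset_univ {i, j})
          (f := fun l => ∑' n : ℕ, ((if l = i then ((n : ℕ) : ℝ≥0∞) else 1)
            * (if l = j then ((n : ℕ) : ℝ≥0∞) else 1)) * q l n) ?_]
        · rw [Finset.prod_pair hij]
          congr 1 <;> refine tsum_congr fun n => ?_ <;> simp [hij, hij.symm]
        · intro l _ hl
          simp only [Finset.mem_insert, Finset.mem_singleton, not_or] at hl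
          simp [hl.1, hl.2, hq l]

noncomputable def gcpE (k : ℕ) (r : Fin k → ℝ) (n : ℕ) : ℝ≥0∞ :=
  ∑' x : Fin k → ℕ,
    if (∑ j : Fin k, ((j : ℕ) + 1) * x j) = n then ∏ j, qe (r j) (x j) else 0

lemma gcpE_F {k : ℕ} (r : Fin k → ℝ) (F : ℕ → ℝ≥0∞) :
    ∑' n : ℕ, F n * gcpE k r n
      = ∑' x : Fin k → ℕ, F (∑ j : Fin k, ((j : ℕ) + 1) * x j) * ∏ j, qe (r j) (x j) := by
  unfold gcpE
  simp only [← ENNReal.tsum_mul_left]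
  rw [ENNReal.tsum_comm]
  refine tsum_congr fun x => ?_
  simp only [mul_ite, mul_zero]
  rw [tsum_eq_single (∑ j : Fin k, ((j : ℕ) + 1) * x j) (fun n hn => by rw [if_neg (Ne.symm hn)])]
  rw [if_pos rfl]

lemma gcpE_sum {k : ℕ} {r : Fin k → ℝ} (hr : ∀ j, 0 ≤ r j) : ∑' n : ℕ, gcpE k r n = 1 := by
  have := gcpE_F r (fun _ => 1)
  simp only [one_mul] at this
  rw [this, tsum_pi_prod (fun j => qe (r j))]
  exact Finset.prod_eq_one fun j _ => qe_tsum (hr j)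

lemma gcpE_le_one {k : ℕ} {r : Fin k → ℝ} (hr : ∀ j, 0 ≤ r j) (n : ℕ) : gcpE k r n ≤ 1 := by
  rw [← gcpE_sum hr]
  exact ENNReal.le_tsum n

lemma ofReal_w {k : ℕ} (j : Fin k) :
    ENNReal.ofReal (((j : ℕ) : ℝ) + 1) = ((j : ℕ) : ℝ≥0∞) + 1 := by
  rw [show (((j : ℕ) : ℝ) + 1) = (((j : ℕ) + 1 : ℕ) : ℝ) by push_cast; ring,
    ENNReal.ofReal_natCast]
  push_cast
  ring

lemma gcpE_mean {k : ℕ} {r : Fin k → ℝ} (hr : ∀ j, 0 ≤ r j) :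
    ∑' n : ℕ, (n : ℝ≥0∞) * gcpE k r n
      = ENNReal.ofReal (∑ j : Fin k, (((j : ℕ) : ℝ) + 1) * r j) := by
  have hq : ∀ i, ∑' n : ℕ, qe (r i) n = 1 := fun i => qe_tsum (hr i)
  rw [gcpE_F r (fun n => (n : ℝ≥0∞))]
  have cast1 : ∀ x : Fin k → ℕ,
      ((∑ j : Fin k, ((j : ℕ) + 1) * x j : ℕ) : ℝ≥0∞)
        = ∑ j : Fin k, (((j : ℕ) : ℝ≥0∞) + 1) * (x j : ℝ≥0∞) := by
    intro x; push_cast; ring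
  calc ∑' x : Fin k → ℕ, ((∑ j : Fin k, ((j : ℕ) + 1) * x j : ℕ) : ℝ≥0∞) * ∏ j, qe (r j) (x j)
      = ∑' x : Fin k → ℕ, ∑ j : Fin k,
          (((j : ℕ) : ℝ≥0∞) + 1) * ((x j : ℝ≥0∞) * ∏ i, qe (r i) (x i)) := by
        refine tsum_congr fun x => ?_
        rw [cast1, Finset.sum_mul]
        exact Finset.sum_congr rfl fun j _ => by ring
    _ = ∑ j : Fin k, (((j : ℕ) : ℝ≥0∞) + 1) * ∑' x : Fin k → ℕ, (x j : ℝ≥0∞) * ∏ i, qe (r i) (x i) := by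
        rw [Summable.tsum_finsetSum (fun j _ => ENNReal.summable)]
        exact Finset.sum_congr rfl fun j _ => ENNReal.tsum_mul_left
    _ = ∑ j : Fin k, (((j : ℕ) : ℝ≥0∞) + 1) * ENNReal.ofReal (r j) := by
        refine Finset.sum_congr rfl fun j _ => ?_
        have := E_coord (fun i => qe (r i)) hq j 1
        simp only [pow_one] at this
        rw [this, qe_mean (hr j)]
    _ = ENNReal.ofReal (∑ j : Fin k, (((j : ℕ) : ℝ) + 1) * r j) := by
        rw [ENNReal.ofReal_sum_of_nonneg (fun j _ => mul_nonneg (by positivity) (hr j))]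
        exact Finset.sum_congr rfl fun j _ => by
          rw [ENNReal.ofReal_mul (by positivity), ofReal_w]

lemma gcpE_sq {k : ℕ} {r : Fin k → ℝ} (hr : ∀ j, 0 ≤ r j) :
    ∑' n : ℕ, (n : ℝ≥0∞) ^ 2 * gcpE k r n
      = ENNReal.ofReal ((∑ j : Fin k, (((j : ℕ) : ℝ) + 1) * r j) ^ 2
          + ∑ j : Fin k, (((j : ℕ) : ℝ) + 1) ^ 2 * r j) := by
  have hq : ∀ i, ∑' n : ℕ, qe (r i) n = 1 := fun i => qe_tsum (hr i)
  rw [gcpE_F r (fun n => (n : ℝ≥0∞) ^ 2)]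
  set a : Fin k → ℝ≥0∞ := fun j => (((j : ℕ) : ℝ≥0∞) + 1) * ENNReal.ofReal (r j) with ha
  set d : Fin k → ℝ≥0∞ := fun j => (((j : ℕ) : ℝ≥0∞) + 1) ^ 2 * ENNReal.ofReal (r j) with hd
  have Eij : ∀ i j : Fin k, ∑' x : Fin k → ℕ,
      ((x i : ℝ≥0∞) * (x j : ℝ≥0∞)) * ∏ l, qe (r l) (x l)
        = ENNReal.ofReal (r i) * ENNReal.ofReal (r j) + (if i = j then ENNReal.ofReal (r j) else 0) := by
    intro i j
    by_cases hij : i = j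
    · subst hij
      have h2 : ∀ x : Fin k → ℕ, ((x i : ℝ≥0∞) * (x i : ℝ≥0∞)) = (x i : ℝ≥0∞) ^ 2 := by
        intro x; ring
      simp only [h2]
      rw [E_coord (fun l => qe (r l)) hq i 2, qe_sq (hr i),
        ENNReal.ofReal_add (by positivity) (hr i), ENNReal.ofReal_pow (hr i)]
      simp [sq]
    · rw [E_pair (fun l => qe (r l)) hq hij, if_neg hij]
      have m1 := qe_mean (hr i); have m2 := qe_mean (hr j)
      rw [m1, m2, add_zero]
  calc ∑' x : Fin k → ℕ,
        ((∑ j : Fin k, ((j : ℕ) + 1) * x j : ℕ) : ℝ≥0∞) ^ 2 * ∏ l, qe (r l) (x l)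
      = ∑' x : Fin k → ℕ, ∑ i : Fin k, ∑ j : Fin k,
          ((((i : ℕ) : ℝ≥0∞) + 1) * (((j : ℕ) : ℝ≥0∞) + 1)) *
            (((x i : ℝ≥0∞) * (x j : ℝ≥0∞)) * ∏ l, qe (r l) (x l)) := by
        refine tsum_congr fun x => ?_
        have cast1 : ((∑ j : Fin k, ((j : ℕ) + 1) * x j : ℕ) : ℝ≥0∞)
            = ∑ j : Fin k, (((j : ℕ) : ℝ≥0∞) + 1) * (x j : ℝ≥0∞) := by push_cast; ring
        rw [cast1, sq, Finset.sum_mul_sum, Finset.sum_mul]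
        refine Finset.sum_congr rfl fun i _ => ?_
        rw [Finset.sum_mul]
        exact Finset.sum_congr rfl fun j _ => by ring
    _ = ∑ i : Fin k, ∑ j : Fin k,
          ((((i : ℕ) : ℝ≥0∞) + 1) * (((j : ℕ) : ℝ≥0∞) + 1)) *
            ∑' x : Fin k → ℕ, ((x i : ℝ≥0∞) * (x j : ℝ≥0∞)) * ∏ l, qe (r l) (x l) := by
        rw [Summable.tsum_finsetSum (fun i _ => ENNReal.summable)]
        refine Finset.sum_congr rfl fun i _ => ?_
        rw [Summable.tsum_finsetSum (fun j _ => ENNReal.summable)]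
        exact Finset.sum_congr rfl fun j _ => ENNReal.tsum_mul_left
    _ = ∑ i : Fin k, ∑ j : Fin k, (a i * a j + (if i = j then d j else 0)) := by
        refine Finset.sum_congr rfl fun i _ => Finset.sum_congr rfl fun j _ => ?_
        rw [Eij i j, mul_add]
        by_cases hij : i = j
        · subst hij
          simp only [ha, hd, if_true, eq_self_iff_true]
          ring
        · simp only [ha, hd, hij, if_false, mul_zero, add_zero]
          ring
    _ = (∑ j : Fin k, a j) ^ 2 + ∑ j : Fin k, d j := by
        simp only [Finset.sum_add_distrib]
        congr 1
        · rw [sq, Finset.sum_mul_sum]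
        · exact Finset.sum_congr rfl fun i _ => by rw [Finset.sum_ite_eq]; simp
    _ = ENNReal.ofReal ((∑ j : Fin k, (((j : ℕ) : ℝ) + 1) * r j) ^ 2
          + ∑ j : Fin k, (((j : ℕ) : ℝ) + 1) ^ 2 * r j) := by
        have hA : (∑ j : Fin k, a j) = ENNReal.ofReal (∑ j : Fin k, (((j : ℕ) : ℝ) + 1) * r j) := by
          rw [ENNReal.ofReal_sum_of_nonneg (fun j _ => mul_nonneg (by positivity) (hr j))]
          exact Finset.sum_congr rfl fun j _ => by
            rw [ha, ENNReal.ofReal_mul (by positivity), ofReal_w]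
        have hD : (∑ j : Fin k, d j) = ENNReal.ofReal (∑ j : Fin k, (((j : ℕ) : ℝ) + 1) ^ 2 * r j) := by
          rw [ENNReal.ofReal_sum_of_nonneg (fun j _ => mul_nonneg (by positivity) (hr j))]
          exact Finset.sum_congr rfl fun j _ => by
            rw [hd, ENNReal.ofReal_mul (by positivity), ENNReal.ofReal_pow (by positivity), ofReal_w]
        rw [hA, hD, ENNReal.ofReal_add (by positivity) ?_, ENNReal.ofReal_pow ?_]
        · exact Finset.sum_nonneg fun j _ => mul_nonneg (by positivity) (hr j)
        · exact Finset.sum_nonneg fun j _ => mul_nonneg (by positivity) (hr j)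

lemma gcpE_eq_ofReal {k : ℕ} {lam : Fin k → ℝ} {t : ℝ} (hr : ∀ j, 0 ≤ lam j * t) (n : ℕ) :
    gcpE k (fun j => lam j * t) n = ENNReal.ofReal (gcpPmf k lam n t) := by
  set f : (Fin k → ℕ) → ℝ := fun x =>
    if (∑ j : Fin k, ((j : ℕ) + 1) * x j) = n then
      ∏ j : Fin k, (lam j * t) ^ (x j) / (Nat.factorial (x j)) * Real.exp (-(lam j * t))
    else 0 with hf
  have hnn : ∀ x, 0 ≤ f x := by
    intro x
    rw [hf]
    dsimp only
    split
    · exact Finset.prod_nonneg fun j _ => pois_nonneg (hr j) (x j)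
    · exact le_refl 0
  have h1 : gcpE k (fun j => lam j * t) n = ∑' x, ENNReal.ofReal (f x) := by
    refine tsum_congr fun x => ?_
    rw [hf]
    dsimp only
    split
    · exact (ENNReal.ofReal_prod_of_nonneg fun j _ => pois_nonneg (hr j) (x j)).symm
    · rw [ENNReal.ofReal_zero]
  have hne : ∑' x, ENNReal.ofReal (f x) ≠ ⊤ :=
    (lt_of_le_of_lt (h1 ▸ gcpE_le_one hr n) ENNReal.one_lt_top).ne
  have hsum : Summable f := by
    have h2 := ENNReal.summable_toReal hne
    refine (summable_congr fun x => ?_).mp h2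
    rw [ENNReal.toReal_ofReal (hnn x)]
  rw [h1, ← ENNReal.ofReal_tsum_of_nonneg hnn hsum]
  rfl

lemma gcpPmf_nonneg {k : ℕ} {lam : Fin k → ℝ} {t : ℝ} (hr : ∀ j, 0 ≤ lam j * t) (n : ℕ) :
    0 ≤ gcpPmf k lam n t := by
  refine tsum_nonneg fun x => ?_
  split
  · exact Finset.prod_nonneg fun j _ => pois_nonneg (hr j) (x j)
  · exact le_refl 0

lemma gcpPmf_eq_toReal {k : ℕ} {lam : Fin k → ℝ} {t : ℝ} (hr : ∀ j, 0 ≤ lam j * t) (n : ℕ) :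
    gcpPmf k lam n t = (gcpE k (fun j => lam j * t) n).toReal := by
  rw [gcpE_eq_ofReal hr, ENNReal.toReal_ofReal (gcpPmf_nonneg hr n)]

noncomputable def igcpE (k : ℕ) (lam : Fin k → ℝ) (k0 : ℕ) (mu : Fin k0 → ℝ)
    (n : ℕ) (t : ℝ) : ℝ≥0∞ :=
  ∑' s : ℕ, gcpE k (fun j => lam j * (s : ℝ)) n * gcpE k0 (fun j0 => mu j0 * t) s

variable {k : ℕ} {lam : Fin k → ℝ} {k0 : ℕ} {mu : Fin k0 → ℝ} {t : ℝ}

lemma hr1 (hlam : ∀ j, 0 ≤ lam j) (s : ℕ) : ∀ j, 0 ≤ lam j * (s : ℝ) :=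
  fun j => mul_nonneg (hlam j) (Nat.cast_nonneg s)

lemma hr0 (hmu : ∀ j0, 0 ≤ mu j0) (ht : 0 ≤ t) : ∀ j0, 0 ≤ mu j0 * t :=
  fun j0 => mul_nonneg (hmu j0) ht

lemma igcpE_le_one (hlam : ∀ j, 0 ≤ lam j) (hmu : ∀ j0, 0 ≤ mu j0) (ht : 0 ≤ t) (n : ℕ) :
    igcpE k lam k0 mu n t ≤ 1 := by
  unfold igcpE
  calc ∑' s : ℕ, gcpE k (fun j => lam j * (s : ℝ)) n * gcpE k0 (fun j0 => mu j0 * t) s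
      ≤ ∑' s : ℕ, 1 * gcpE k0 (fun j0 => mu j0 * t) s :=
        ENNReal.tsum_le_tsum fun s =>
          mul_le_mul_left (gcpE_le_one (hr1 hlam s) n) _
    _ = 1 := by
        simp only [one_mul]
        exact gcpE_sum (hr0 hmu ht)

lemma igcpE_ne_top (hlam : ∀ j, 0 ≤ lam j) (hmu : ∀ j0, 0 ≤ mu j0) (ht : 0 ≤ t) (n : ℕ) :
    igcpE k lam k0 mu n t ≠ ⊤ :=
  (lt_of_le_of_lt (igcpE_le_one hlam hmu ht n) ENNReal.one_lt_top).ne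

lemma igcpPmf_eq_toReal' (hlam : ∀ j, 0 ≤ lam j) (hmu : ∀ j0, 0 ≤ mu j0) (ht : 0 ≤ t) (n : ℕ) :
    (∑' s : ℕ, gcpPmf k lam n s * gcpPmf k0 mu s t) = (igcpE k lam k0 mu n t).toReal := by
  have hfin : ∀ s : ℕ,
      gcpE k (fun j => lam j * (s : ℝ)) n * gcpE k0 (fun j0 => mu j0 * t) s ≠ ⊤ := fun s =>
    ENNReal.mul_ne_top
      (lt_of_le_of_lt (gcpE_le_one (hr1 hlam s) n) ENNReal.one_lt_top).ne
      (lt_of_le_of_lt (gcpE_le_one (hr0 hmu ht) s) ENNReal.one_lt_top).ne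
  rw [igcpE, ENNReal.tsum_toReal_eq hfin]
  refine tsum_congr fun s => ?_
  rw [ENNReal.toReal_mul, gcpPmf_eq_toReal (hr1 hlam s), gcpPmf_eq_toReal (hr0 hmu ht)]

lemma igcpE_mean (hlam : ∀ j, 0 ≤ lam j) (hmu : ∀ j0, 0 ≤ mu j0) (ht : 0 ≤ t) :
    ∑' n : ℕ, (n : ℝ≥0∞) * igcpE k lam k0 mu n t
      = ENNReal.ofReal ((∑ j : Fin k, (((j : ℕ) : ℝ) + 1) * lam j) *
          ((∑ j0 : Fin k0, (((j0 : ℕ) : ℝ) + 1) * mu j0) * t)) := by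
  set A : ℝ := ∑ j : Fin k, (((j : ℕ) : ℝ) + 1) * lam j with hA
  have hA0 : 0 ≤ A := Finset.sum_nonneg fun j _ => mul_nonneg (by positivity) (hlam j)
  unfold igcpE
  calc ∑' n : ℕ, (n : ℝ≥0∞) * ∑' s : ℕ,
        gcpE k (fun j => lam j * (s : ℝ)) n * gcpE k0 (fun j0 => mu j0 * t) s
      = ∑' s : ℕ, (∑' n : ℕ, (n : ℝ≥0∞) * gcpE k (fun j => lam j * (s : ℝ)) n)
          * gcpE k0 (fun j0 => mu j0 * t) s := by
        simp only [← ENNReal.tsum_mul_left]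
        rw [ENNReal.tsum_comm]
        refine tsum_congr fun s => ?_
        rw [← ENNReal.tsum_mul_right]
        exact tsum_congr fun n => by ring
    _ = ∑' s : ℕ, (ENNReal.ofReal A * (s : ℝ≥0∞)) * gcpE k0 (fun j0 => mu j0 * t) s := by
        refine tsum_congr fun s => ?_
        rw [gcpE_mean (hr1 hlam s)]
        congr 1
        rw [show (∑ j : Fin k, (((j : ℕ) : ℝ) + 1) * (lam j * (s : ℝ))) = A * (s : ℝ) by
          rw [hA, Finset.sum_mul]; exact Finset.sum_congr rfl fun j _ => by ring]
        rw [ENNReal.ofReal_mul hA0, ENNReal.ofReal_natCast]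
    _ = ENNReal.ofReal A * ∑' s : ℕ, (s : ℝ≥0∞) * gcpE k0 (fun j0 => mu j0 * t) s := by
        rw [← ENNReal.tsum_mul_left]
        exact tsum_congr fun s => by ring
    _ = ENNReal.ofReal (A * ((∑ j0 : Fin k0, (((j0 : ℕ) : ℝ) + 1) * mu j0) * t)) := by
        have hsum : (∑ j0 : Fin k0, (((j0 : ℕ) : ℝ) + 1) * (mu j0 * t))
            = (∑ j0 : Fin k0, (((j0 : ℕ) : ℝ) + 1) * mu j0) * t := by
          rw [Finset.sum_mul]; exact Finset.sum_congr rfl fun j0 _ => by ring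
        rw [gcpE_mean (hr0 hmu ht), hsum, ← ENNReal.ofReal_mul hA0]

lemma igcpE_sq (hlam : ∀ j, 0 ≤ lam j) (hmu : ∀ j0, 0 ≤ mu j0) (ht : 0 ≤ t) :
    ∑' n : ℕ, (n : ℝ≥0∞) ^ 2 * igcpE k lam k0 mu n t
      = ENNReal.ofReal ((∑ j : Fin k, (((j : ℕ) : ℝ) + 1) * lam j) ^ 2 *
          (((∑ j0 : Fin k0, (((j0 : ℕ) : ℝ) + 1) * mu j0) * t) ^ 2
            + (∑ j0 : Fin k0, (((j0 : ℕ) : ℝ) + 1) ^ 2 * mu j0) * t)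
          + (∑ j : Fin k, (((j : ℕ) : ℝ) + 1) ^ 2 * lam j) *
            ((∑ j0 : Fin k0, (((j0 : ℕ) : ℝ) + 1) * mu j0) * t)) := by
  set A : ℝ := ∑ j : Fin k, (((j : ℕ) : ℝ) + 1) * lam j with hA
  set C : ℝ := ∑ j : Fin k, (((j : ℕ) : ℝ) + 1) ^ 2 * lam j with hC
  have hA0 : 0 ≤ A := Finset.sum_nonneg fun j _ => mul_nonneg (by positivity) (hlam j)
  have hC0 : 0 ≤ C := Finset.sum_nonneg fun j _ => mul_nonneg (by positivity) (hlam j)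
  unfold igcpE
  calc ∑' n : ℕ, (n : ℝ≥0∞) ^ 2 * ∑' s : ℕ,
        gcpE k (fun j => lam j * (s : ℝ)) n * gcpE k0 (fun j0 => mu j0 * t) s
      = ∑' s : ℕ, (∑' n : ℕ, (n : ℝ≥0∞) ^ 2 * gcpE k (fun j => lam j * (s : ℝ)) n)
          * gcpE k0 (fun j0 => mu j0 * t) s := by
        simp only [← ENNReal.tsum_mul_left]
        rw [ENNReal.tsum_comm]
        refine tsum_congr fun s => ?_
        rw [← ENNReal.tsum_mul_right]
        exact tsum_congr fun n => by ring
    _ = ∑' s : ℕ, (ENNReal.ofReal (A ^ 2) * (s : ℝ≥0∞) ^ 2 + ENNReal.ofReal C * (s : ℝ≥0∞))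
          * gcpE k0 (fun j0 => mu j0 * t) s := by
        refine tsum_congr fun s => ?_
        rw [gcpE_sq (hr1 hlam s)]
        congr 1
        have e1 : (∑ j : Fin k, (((j : ℕ) : ℝ) + 1) * (lam j * (s : ℝ))) = A * (s : ℝ) := by
          rw [hA, Finset.sum_mul]; exact Finset.sum_congr rfl fun j _ => by ring
        have e2 : (∑ j : Fin k, (((j : ℕ) : ℝ) + 1) ^ 2 * (lam j * (s : ℝ))) = C * (s : ℝ) := by
          rw [hC, Finset.sum_mul]; exact Finset.sum_congr rfl fun j _ => by ring
        rw [e1, e2, mul_pow, ENNReal.ofReal_add (by positivity) (mul_nonneg hC0 (by positivity)),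
          ENNReal.ofReal_mul (by positivity), ENNReal.ofReal_mul hC0,
          ENNReal.ofReal_pow (Nat.cast_nonneg s), ENNReal.ofReal_natCast]
    _ = ENNReal.ofReal (A ^ 2) * (∑' s : ℕ, (s : ℝ≥0∞) ^ 2 * gcpE k0 (fun j0 => mu j0 * t) s)
          + ENNReal.ofReal C * (∑' s : ℕ, (s : ℝ≥0∞) * gcpE k0 (fun j0 => mu j0 * t) s) := by
        rw [← ENNReal.tsum_mul_left (a := ENNReal.ofReal (A ^ 2)),
          ← ENNReal.tsum_mul_left (a := ENNReal.ofReal C), ← ENNReal.tsum_add]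
        exact tsum_congr fun s => by ring
    _ = _ := by
        rw [gcpE_sq (hr0 hmu ht), gcpE_mean (hr0 hmu ht)]
        have hsB : (∑ j0 : Fin k0, (((j0 : ℕ) : ℝ) + 1) * (mu j0 * t))
            = (∑ j0 : Fin k0, (((j0 : ℕ) : ℝ) + 1) * mu j0) * t := by
          rw [Finset.sum_mul]; exact Finset.sum_congr rfl fun j0 _ => by ring
        have hsD : (∑ j0 : Fin k0, (((j0 : ℕ) : ℝ) + 1) ^ 2 * (mu j0 * t))
            = (∑ j0 : Fin k0, (((j0 : ℕ) : ℝ) + 1) ^ 2 * mu j0) * t := by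
          rw [Finset.sum_mul]; exact Finset.sum_congr rfl fun j0 _ => by ring
        have hB0 : 0 ≤ (∑ j0 : Fin k0, (((j0 : ℕ) : ℝ) + 1) * mu j0) :=
          Finset.sum_nonneg fun j0 _ => mul_nonneg (by positivity) (hmu j0)
        have hD0 : 0 ≤ (∑ j0 : Fin k0, (((j0 : ℕ) : ℝ) + 1) ^ 2 * mu j0) :=
          Finset.sum_nonneg fun j0 _ => mul_nonneg (by positivity) (hmu j0)
        rw [hsB, hsD, ← ENNReal.ofReal_mul (by positivity), ← ENNReal.ofReal_mul hC0,
          ← ENNReal.ofReal_add (by positivity) (by positivity)]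


lemma igcpPmf_eq_toReal (hlam : ∀ j, 0 ≤ lam j) (hmu : ∀ j0, 0 ≤ mu j0) (ht : 0 ≤ t) (n : ℕ) :
    igcpPmf k lam k0 mu n t = (igcpE k lam k0 mu n t).toReal := by
  rw [igcpPmf]
  exact igcpPmf_eq_toReal' hlam hmu ht n

end IGCPAux

open IGCPAux in
/-- mean `S·t` and variance `T·t` of the IGCP, and overdispersion. -/
theorem igcp_mean_var (k : ℕ) (hk : 0 < k) (lam : Fin k → ℝ) (hlam : ∀ j, 0 < lam j)
    (k0 : ℕ) (hk0 : 0 < k0) (mu : Fin k0 → ℝ) (hmu : ∀ j0, 0 < mu j0)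
    (S T : ℝ)
    (hS : S = (∑ j : Fin k, ((j : ℕ) + 1 : ℝ) * lam j) *
      (∑ j0 : Fin k0, ((j0 : ℕ) + 1 : ℝ) * mu j0))
    (hT : T = (∑ j : Fin k, ((j : ℕ) + 1 : ℝ) * lam j) ^ 2 *
        (∑ j0 : Fin k0, ((j0 : ℕ) + 1 : ℝ) ^ 2 * mu j0) +
      (∑ j : Fin k, ((j : ℕ) + 1 : ℝ) ^ 2 * lam j) *
        (∑ j0 : Fin k0, ((j0 : ℕ) + 1 : ℝ) * mu j0))
    (t : ℝ) (ht : 0 ≤ t) :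
    (∑' n : ℕ, (n : ℝ) * igcpPmf k lam k0 mu n t = S * t) ∧
    (∑' n : ℕ, (n : ℝ) ^ 2 * igcpPmf k lam k0 mu n t - (S * t) ^ 2 = T * t) ∧
    (0 < t →
      S * t < ∑' n : ℕ, (n : ℝ) ^ 2 * igcpPmf k lam k0 mu n t - (S * t) ^ 2) := by
  have hlam' : ∀ j, 0 ≤ lam j := fun j => (hlam j).le
  have hmu' : ∀ j0, 0 ≤ mu j0 := fun j0 => (hmu j0).le
  set A : ℝ := ∑ j : Fin k, (((j : ℕ) : ℝ) + 1) * lam j with hAdef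
  set B : ℝ := ∑ j0 : Fin k0, (((j0 : ℕ) : ℝ) + 1) * mu j0 with hBdef
  set C : ℝ := ∑ j : Fin k, (((j : ℕ) : ℝ) + 1) ^ 2 * lam j with hCdef
  set D : ℝ := ∑ j0 : Fin k0, (((j0 : ℕ) : ℝ) + 1) ^ 2 * mu j0 with hDdef
  have hA0 : 0 ≤ A := Finset.sum_nonneg fun j _ => mul_nonneg (by positivity) (hlam' j)
  have hB0 : 0 ≤ B := Finset.sum_nonneg fun j0 _ => mul_nonneg (by positivity) (hmu' j0)
  have h1 : ∑' n : ℕ, (n : ℝ) * igcpPmf k lam k0 mu n t = S * t := by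
    have hne : ∀ n : ℕ, (n : ℝ≥0∞) * igcpE k lam k0 mu n t ≠ ⊤ := fun n =>
      ENNReal.mul_ne_top (ENNReal.natCast_ne_top n) (igcpE_ne_top hlam' hmu' ht n)
    calc ∑' n : ℕ, (n : ℝ) * igcpPmf k lam k0 mu n t
        = ∑' n : ℕ, ((n : ℝ≥0∞) * igcpE k lam k0 mu n t).toReal := by
          refine tsum_congr fun n => ?_
          rw [ENNReal.toReal_mul, ENNReal.toReal_natCast,
            igcpPmf_eq_toReal hlam' hmu' ht n]
      _ = (∑' n : ℕ, (n : ℝ≥0∞) * igcpE k lam k0 mu n t).toReal :=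
          (ENNReal.tsum_toReal_eq hne).symm
      _ = S * t := by
          rw [igcpE_mean hlam' hmu' ht,
            ENNReal.toReal_ofReal (mul_nonneg hA0 (mul_nonneg hB0 ht)), hS]
          ring
  have h2 : ∑' n : ℕ, (n : ℝ) ^ 2 * igcpPmf k lam k0 mu n t - (S * t) ^ 2 = T * t := by
    have hne : ∀ n : ℕ, (n : ℝ≥0∞) ^ 2 * igcpE k lam k0 mu n t ≠ ⊤ := fun n =>
      ENNReal.mul_ne_top (ENNReal.pow_ne_top (ENNReal.natCast_ne_top n))
        (igcpE_ne_top hlam' hmu' ht n)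
    have hm2 : ∑' n : ℕ, (n : ℝ) ^ 2 * igcpPmf k lam k0 mu n t
        = A ^ 2 * ((B * t) ^ 2 + D * t) + C * (B * t) := by
      calc ∑' n : ℕ, (n : ℝ) ^ 2 * igcpPmf k lam k0 mu n t
          = ∑' n : ℕ, ((n : ℝ≥0∞) ^ 2 * igcpE k lam k0 mu n t).toReal := by
            refine tsum_congr fun n => ?_
            rw [ENNReal.toReal_mul, ENNReal.toReal_pow, ENNReal.toReal_natCast,
              igcpPmf_eq_toReal hlam' hmu' ht n]
        _ = (∑' n : ℕ, (n : ℝ≥0∞) ^ 2 * igcpE k lam k0 mu n t).toReal :=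
            (ENNReal.tsum_toReal_eq hne).symm
        _ = A ^ 2 * ((B * t) ^ 2 + D * t) + C * (B * t) := by
            rw [igcpE_sq hlam' hmu' ht]
            have hD0 : 0 ≤ D :=
              Finset.sum_nonneg fun j0 _ => mul_nonneg (by positivity) (hmu' j0)
            have hC0 : 0 ≤ C :=
              Finset.sum_nonneg fun j _ => mul_nonneg (by positivity) (hlam' j)
            rw [ENNReal.toReal_ofReal (by positivity)]
    rw [hm2, hS, hT]
    ring
  refine ⟨h1, h2, fun ht' => ?_⟩
  rw [h2]
  have hApos : 0 < A := Finset.sum_pos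
    (fun j _ => mul_pos (by positivity) (hlam j)) ⟨⟨0, hk⟩, Finset.mem_univ _⟩
  have hBpos : 0 < B := Finset.sum_pos
    (fun j0 _ => mul_pos (by positivity) (hmu j0)) ⟨⟨0, hk0⟩, Finset.mem_univ _⟩
  have hCA : A ≤ C := Finset.sum_le_sum fun j _ =>
    mul_le_mul_of_nonneg_right
      (le_self_pow₀ (by linarith [(by positivity : (0:ℝ) ≤ ((j : ℕ) : ℝ))]) (by norm_num))
      (hlam' j)
  have hDB : B ≤ D := Finset.sum_le_sum fun j0 _ =>
    mul_le_mul_of_nonneg_right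
      (le_self_pow₀ (by linarith [(by positivity : (0:ℝ) ≤ ((j0 : ℕ) : ℝ))]) (by norm_num))
      (hmu' j0)
  have hST : S < T := by
    rw [hS, hT]
    nlinarith [mul_pos (mul_pos hApos hApos) hBpos,
      mul_le_mul_of_nonneg_left hDB (sq_nonneg A),
      mul_le_mul_of_nonneg_right hCA hBpos.le]
  exact mul_lt_mul_of_pos_right hST ht'
end

section
/- For every t > 0, the Riemann–Liouville fractional integral X^α(t) satisfies E[X^α(t)] = S·t^{α+1}/Γ(α+2) and Var(X^α(t)) = T·t^{2α+1}/((2α+1)·Γ(α+1)²). -/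
open MeasureTheory intervalIntegral

lemma aux_rpow_int {β : ℝ} (hβ : -1 < β) (t a b : ℝ) :
    ∫ s in a..b, (t - s) ^ β = ((t - a) ^ (β + 1) - (t - b) ^ (β + 1)) / (β + 1) := by
  rw [intervalIntegral.integral_comp_sub_left (fun x => x ^ β) t,
    integral_rpow (Or.inl hβ)]

lemma aux_rpow_ii {β : ℝ} (hβ : -1 < β) (t a b : ℝ) :
    IntervalIntegrable (fun s => (t - s) ^ β) volume a b := by
  have := (intervalIntegrable_rpow' (r := β) (a := t - a) (b := t - b) hβ).comp_sub_left t
  simpa using this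

lemma aux_rpow_succ {x : ℝ} (hx : 0 ≤ x) {β : ℝ} (hβ : β + 1 ≠ 0) : x ^ (β + 1) = x ^ β * x := by
  rcases hx.eq_or_lt with h | h
  · rw [← h, Real.zero_rpow hβ, mul_zero]
  · exact Real.rpow_add_one h.ne' β

lemma aux_rpow_addexp {x : ℝ} (hx : 0 ≤ x) {β γ : ℝ} (hγ : 0 < γ) (hsum : β + γ ≠ 0) :
    x ^ β * x ^ γ = x ^ (β + γ) := by
  rcases hx.eq_or_lt with h | h
  · rw [← h, Real.zero_rpow hγ.ne', Real.zero_rpow hsum, mul_zero]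
  · exact (Real.rpow_add h β γ).symm

variable {α t : ℝ}

/-- ∫_a^t (t-w)^{α-1} dw = (t-a)^α / α -/
lemma det_tail (hα : 0 < α) (a : ℝ) :
    ∫ w in a..t, (t - w) ^ (α - 1) = (t - a) ^ α / α := by
  rw [aux_rpow_int (by linarith) t a t, sub_self,
    Real.zero_rpow (by intro h; nlinarith [h]), sub_add_cancel]
  simp

/-- ∫_0^s (t-w)^{α-1} * w dw -/
lemma det_head (hα : 0 < α) (ht : 0 < t) {s : ℝ} (hs0 : 0 ≤ s) (hst : s ≤ t) :
    ∫ w in (0:ℝ)..s, (t - w) ^ (α - 1) * w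
      = t * ((t ^ α - (t - s) ^ α) / α) - (t ^ (α + 1) - (t - s) ^ (α + 1)) / (α + 1) := by
  have hcong : ∀ w ∈ Set.uIcc (0:ℝ) s,
      (t - w) ^ (α - 1) * w = t * (t - w) ^ (α - 1) - (t - w) ^ α := by
    intro w hw
    rw [Set.uIcc_of_le hs0] at hw
    have hw0 : 0 ≤ t - w := by have := hw.2; linarith
    have h1 : (t - w) ^ α = (t - w) ^ (α - 1) * (t - w) := by
      have := aux_rpow_succ hw0 (β := α - 1) (by intro h; nlinarith [h])
      rwa [sub_add_cancel] at this
    rw [h1]; ring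
  rw [intervalIntegral.integral_congr hcong,
    intervalIntegral.integral_sub ((aux_rpow_ii (by linarith) t 0 s).const_mul t)
      (aux_rpow_ii (by linarith) t 0 s),
    intervalIntegral.integral_const_mul,
    aux_rpow_int (by linarith) t 0 s, aux_rpow_int (by linarith) t 0 s,
    sub_add_cancel, sub_zero]

lemma det_s (hα : 0 < α) (ht : 0 < t) :
    ∫ s in (0:ℝ)..t, (t - s) ^ (α - 1) * s = t ^ (α + 1) / (α * (α + 1)) := by
  rw [det_head hα ht ht.le le_rfl, sub_self,
    Real.zero_rpow hα.ne', Real.zero_rpow (by positivity)]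
  have h1 : t ^ (α + 1) = t ^ α * t := aux_rpow_succ ht.le (by positivity)
  rw [h1]
  field_simp
  ring

lemma det_min (hα : 0 < α) (ht : 0 < t) {s : ℝ} (hs0 : 0 < s) (hst : s ≤ t) :
    ∫ w in (0:ℝ)..t, (t - w) ^ (α - 1) * min s w
      = (t ^ (α + 1) - (t - s) ^ (α + 1)) / (α * (α + 1)) := by
  have hii : ∀ a b : ℝ, IntervalIntegrable (fun w => (t - w) ^ (α - 1) * min s w) volume a b :=
    fun a b => (aux_rpow_ii (by linarith) t a b).mul_continuousOn
      ((continuous_const.min continuous_id).continuousOn)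
  rw [← intervalIntegral.integral_add_adjacent_intervals (hii 0 s) (hii s t)]
  have e1 : ∫ w in (0:ℝ)..s, (t - w) ^ (α - 1) * min s w
      = ∫ w in (0:ℝ)..s, (t - w) ^ (α - 1) * w := by
    apply intervalIntegral.integral_congr
    intro w hw
    rw [Set.uIcc_of_le hs0.le] at hw
    simp [min_eq_right hw.2]
  have e2 : ∫ w in s..t, (t - w) ^ (α - 1) * min s w
      = (∫ w in s..t, (t - w) ^ (α - 1)) * s := by
    rw [← intervalIntegral.integral_mul_const]
    apply intervalIntegral.integral_congr
    intro w hw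
    rw [Set.uIcc_of_le hst] at hw
    simp [min_eq_left hw.1]
  rw [e1, e2, det_head hα ht hs0.le hst, det_tail hα s]
  have hu0 : 0 ≤ t - s := by linarith
  rw [aux_rpow_succ ht.le (β := α) (by positivity), aux_rpow_succ hu0 (β := α) (by positivity)]
  field_simp
  ring

lemma det_KT (hα : 0 < α) (ht : 0 < t) :
    ∫ s in (0:ℝ)..t, (t - s) ^ (α - 1) * ((t ^ (α + 1) - (t - s) ^ (α + 1)) / (α * (α + 1)))
      = t ^ (2 * α + 1) / (α ^ 2 * (2 * α + 1)) := by
  have hcong : ∀ s ∈ Set.uIcc (0:ℝ) t,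
      (t - s) ^ (α - 1) * ((t ^ (α + 1) - (t - s) ^ (α + 1)) / (α * (α + 1)))
        = (t ^ (α + 1) * (t - s) ^ (α - 1) - (t - s) ^ (2 * α)) / (α * (α + 1)) := by
    intro s hs
    rw [Set.uIcc_of_le ht.le] at hs
    have hx : 0 ≤ t - s := by have := hs.2; linarith
    have h2 : (t - s) ^ (α - 1) * (t - s) ^ (α + 1) = (t - s) ^ (2 * α) := by
      rw [aux_rpow_addexp hx (by positivity) (by intro h; nlinarith [h]),
        (by ring : α - 1 + (α + 1) = 2 * α)]
    rw [← h2]; ring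
  rw [intervalIntegral.integral_congr hcong]
  have hii1 : IntervalIntegrable (fun s => t ^ (α + 1) * (t - s) ^ (α - 1)) volume 0 t :=
    (aux_rpow_ii (by linarith) t 0 t).const_mul _
  have hii2 : IntervalIntegrable (fun s : ℝ => (t - s) ^ (2 * α)) volume 0 t :=
    aux_rpow_ii (by linarith) t 0 t
  have e : (fun s => (t ^ (α + 1) * (t - s) ^ (α - 1) - (t - s) ^ (2 * α)) / (α * (α + 1)))
      = fun s => (α * (α + 1))⁻¹ * (t ^ (α + 1) * (t - s) ^ (α - 1) - (t - s) ^ (2 * α)) := by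
    funext s; field_simp
  rw [e, intervalIntegral.integral_const_mul,
    intervalIntegral.integral_sub hii1 hii2, intervalIntegral.integral_const_mul,
    aux_rpow_int (by linarith) t 0 t, aux_rpow_int (by linarith) t 0 t,
    sub_add_cancel, sub_zero, sub_self,
    Real.zero_rpow hα.ne', Real.zero_rpow (by positivity)]
  have e2 : t ^ (α + 1) * t ^ α = t ^ (2 * α + 1) := by
    rw [← Real.rpow_add ht, (by ring : α + 1 + α = 2 * α + 1)]
  rw [sub_zero, sub_zero, ← mul_div_assoc, e2]
  field_simp
  ring

section Prob
variable {Ω : Type*} [MeasurableSpace Ω] {P : Measure Ω} [IsProbabilityMeasure P]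
variable {S T : ℝ} {M : ℝ → Ω → ℝ}

lemma meas_section (hjm : Measurable (Function.uncurry M)) (s : ℝ) : Measurable (M s) :=
  hjm.comp measurable_prodMk_left

lemma sq_integrable (hT : 0 < T)
    (hsec : ∀ s w : ℝ, 0 ≤ s → 0 ≤ w →
      ∫ ω, M s ω * M w ω ∂P = T * min s w + S ^ 2 * s * w)
    {s : ℝ} (hs : 0 < s) : Integrable (fun ω => M s ω * M s ω) P := by
  by_contra h
  have h0 := integral_undef h
  rw [hsec s s hs.le hs.le, min_self] at h0
  nlinarith [sq_nonneg S, sq_nonneg (S * s)]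

lemma mul_integrable (hjm : Measurable (Function.uncurry M)) (hT : 0 < T)
    (hsec : ∀ s w : ℝ, 0 ≤ s → 0 ≤ w →
      ∫ ω, M s ω * M w ω ∂P = T * min s w + S ^ 2 * s * w)
    {s w : ℝ} (hs : 0 < s) (hw : 0 < w) : Integrable (fun ω => M s ω * M w ω) P := by
  refine Integrable.mono' ((sq_integrable hT hsec hs).add (sq_integrable hT hsec hw))
    (((meas_section hjm s).mul (meas_section hjm w)).aestronglyMeasurable)
    (Filter.Eventually.of_forall fun ω => ?_)
  simp only [Pi.add_apply, Real.norm_eq_abs, abs_mul]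
  nlinarith [sq_nonneg (|M s ω| - |M w ω|), sq_abs (M s ω), sq_abs (M w ω),
    abs_nonneg (M s ω), abs_nonneg (M w ω)]

lemma M_integrable (hjm : Measurable (Function.uncurry M)) (hT : 0 < T)
    (hsec : ∀ s w : ℝ, 0 ≤ s → 0 ≤ w →
      ∫ ω, M s ω * M w ω ∂P = T * min s w + S ^ 2 * s * w)
    {s : ℝ} (hs : 0 < s) : Integrable (M s) P := by
  refine Integrable.mono' ((integrable_const 1).add (sq_integrable hT hsec hs))
    (meas_section hjm s).aestronglyMeasurable
    (Filter.Eventually.of_forall fun ω => ?_)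
  simp only [Pi.add_apply, Real.norm_eq_abs]
  nlinarith [sq_nonneg (|M s ω| - 1), sq_abs (M s ω), abs_nonneg (M s ω)]

/-- Uniform L¹ bound for `M s`. -/
lemma lint_bound1 (hjm : Measurable (Function.uncurry M)) (hT : 0 < T)
    (hsec : ∀ s w : ℝ, 0 ≤ s → 0 ≤ w →
      ∫ ω, M s ω * M w ω ∂P = T * min s w + S ^ 2 * s * w)
    {t s : ℝ} (hs : 0 < s) (hst : s ≤ t) :
    ∫⁻ ω, ‖M s ω‖₊ ∂P ≤ ENNReal.ofReal (2 * (T * t + S ^ 2 * (t * t)) + 1) := by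
  simp_rw [← enorm_eq_nnnorm]
  rw [← ofReal_integral_norm_eq_lintegral_enorm (M_integrable hjm hT hsec hs)]
  apply ENNReal.ofReal_le_ofReal
  have hmono : ∫ ω, ‖M s ω‖ ∂P ≤ ∫ ω, (1 + M s ω * M s ω) ∂P := by
    refine integral_mono (M_integrable hjm hT hsec hs).norm
      ((integrable_const 1).add (sq_integrable hT hsec hs)) (fun ω => ?_)
    rw [Real.norm_eq_abs]
    nlinarith [sq_nonneg (|M s ω| - 1), sq_abs (M s ω), abs_nonneg (M s ω)]
  rw [integral_add (integrable_const 1) (sq_integrable hT hsec hs), MeasureTheory.integral_const,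
    hsec s s hs.le hs.le, min_self] at hmono
  simp only [measure_univ, probReal_univ, ENNReal.toReal_one, smul_eq_mul, one_mul] at hmono
  have ht0 : 0 < t := hs.trans_le hst
  have h1 : T * s ≤ T * t := mul_le_mul_of_nonneg_left hst hT.le
  have h3 : S ^ 2 * s * s ≤ S ^ 2 * (t * t) := by
    nlinarith [sq_nonneg S, mul_le_mul hst hst hs.le ht0.le]
  have h5 : 0 < T * t := mul_pos hT ht0
  have h6 : 0 ≤ S ^ 2 * (t * t) := by positivity
  linarith

/-- Uniform L¹ bound for `M s * M w`. -/
lemma lint_bound2 (hjm : Measurable (Function.uncurry M)) (hT : 0 < T)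
    (hsec : ∀ s w : ℝ, 0 ≤ s → 0 ≤ w →
      ∫ ω, M s ω * M w ω ∂P = T * min s w + S ^ 2 * s * w)
    {t s w : ℝ} (hs : 0 < s) (hst : s ≤ t) (hw : 0 < w) (hwt : w ≤ t) :
    ∫⁻ ω, ‖M s ω * M w ω‖₊ ∂P ≤ ENNReal.ofReal (2 * (T * t + S ^ 2 * (t * t)) + 1) := by
  simp_rw [← enorm_eq_nnnorm]
  rw [← ofReal_integral_norm_eq_lintegral_enorm (mul_integrable hjm hT hsec hs hw)]
  apply ENNReal.ofReal_le_ofReal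
  have hmono : ∫ ω, ‖M s ω * M w ω‖ ∂P
      ≤ ∫ ω, (M s ω * M s ω + M w ω * M w ω) ∂P := by
    refine integral_mono (mul_integrable hjm hT hsec hs hw).norm
      ((sq_integrable hT hsec hs).add (sq_integrable hT hsec hw)) (fun ω => ?_)
    simp only [Pi.add_apply, Real.norm_eq_abs, abs_mul]
    nlinarith [sq_nonneg (|M s ω| - |M w ω|), sq_abs (M s ω), sq_abs (M w ω),
      abs_nonneg (M s ω), abs_nonneg (M w ω)]
  rw [integral_add (sq_integrable hT hsec hs) (sq_integrable hT hsec hw),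
    hsec s s hs.le hs.le, hsec w w hw.le hw.le, min_self, min_self] at hmono
  have h1 : T * s ≤ T * t := mul_le_mul_of_nonneg_left hst hT.le
  have h2 : T * w ≤ T * t := mul_le_mul_of_nonneg_left hwt hT.le
  have ht0 : 0 < t := hs.trans_le hst
  have h3 : S ^ 2 * s * s ≤ S ^ 2 * (t * t) := by
    nlinarith [sq_nonneg S, mul_le_mul hst hst hs.le ht0.le]
  have h4 : S ^ 2 * w * w ≤ S ^ 2 * (t * t) := by
    nlinarith [sq_nonneg S, mul_le_mul hwt hwt hw.le ht0.le]
  have h5 : 0 < T * t := mul_pos hT ht0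
  linarith

end Prob


section Prob
variable {Ω : Type*} [MeasurableSpace Ω] {P : Measure Ω} [IsProbabilityMeasure P]
variable {S T : ℝ} {M : ℝ → Ω → ℝ}

lemma prod_integrable1 (hjm : Measurable (Function.uncurry M))
    {α t B : ℝ} (hα : 0 < α) (ht : 0 < t)
    (hb : ∀ s : ℝ, 0 < s → s ≤ t → ∫⁻ ω, ‖M s ω‖₊ ∂P ≤ ENNReal.ofReal B) :
    Integrable (fun p : ℝ × Ω => (t - p.1) ^ (α - 1) * M p.1 p.2)
      ((volume.restrict (Set.Ioc 0 t)).prod P) := by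
  have hmeas : Measurable (fun p : ℝ × Ω => (t - p.1) ^ (α - 1) * M p.1 p.2) := by
    have h1 : Measurable fun p : ℝ × Ω => (t - p.1) ^ (α - 1) := by fun_prop
    exact h1.mul hjm
  refine ⟨hmeas.aestronglyMeasurable, ?_⟩
  rw [hasFiniteIntegral_def,
    MeasureTheory.lintegral_prod _ (hmeas.enorm.aemeasurable)]
  have hgfin : (∫⁻ s in Set.Ioc (0:ℝ) t, ‖(t - s) ^ (α - 1)‖₊ ∂volume) < ⊤ :=
    ((aux_rpow_ii (by linarith) t 0 t).1).2
  have hstep : (∫⁻ s in Set.Ioc (0:ℝ) t, ∫⁻ ω, ‖(t - s) ^ (α - 1) * M s ω‖₊ ∂P ∂volume)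
      ≤ ∫⁻ s in Set.Ioc (0:ℝ) t, (‖(t - s) ^ (α - 1)‖₊ : ENNReal) * ENNReal.ofReal B ∂volume := by
    refine lintegral_mono_ae ((ae_restrict_iff' measurableSet_Ioc).2
      (Filter.Eventually.of_forall fun s hs => ?_))
    have : ∫⁻ ω, ‖(t - s) ^ (α - 1) * M s ω‖₊ ∂P
        = (‖(t - s) ^ (α - 1)‖₊ : ENNReal) * ∫⁻ ω, ‖M s ω‖₊ ∂P := by
      simp_rw [nnnorm_mul, ENNReal.coe_mul]
      exact lintegral_const_mul _ ((hjm.comp measurable_prodMk_left).nnnorm.coe_nnreal_ennreal)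
    rw [this]
    exact mul_le_mul_right (hb s hs.1 hs.2) _
  refine lt_of_le_of_lt hstep ?_
  rw [lintegral_mul_const _ (by fun_prop)]
  exact ENNReal.mul_lt_top hgfin ENNReal.ofReal_lt_top

lemma prod_integrable2 (hjm : Measurable (Function.uncurry M))
    {α t B : ℝ} (hα : 0 < α) (ht : 0 < t)
    (hb : ∀ s w : ℝ, 0 < s → s ≤ t → 0 < w → w ≤ t →
      ∫⁻ ω, ‖M s ω * M w ω‖₊ ∂P ≤ ENNReal.ofReal B) :
    Integrable (fun q : (ℝ × ℝ) × Ω =>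
        ((t - q.1.1) ^ (α - 1) * M q.1.1 q.2) * ((t - q.1.2) ^ (α - 1) * M q.1.2 q.2))
      (((volume.restrict (Set.Ioc 0 t)).prod (volume.restrict (Set.Ioc 0 t))).prod P) := by
  have hmeas : Measurable (fun q : (ℝ × ℝ) × Ω =>
      ((t - q.1.1) ^ (α - 1) * M q.1.1 q.2) * ((t - q.1.2) ^ (α - 1) * M q.1.2 q.2)) := by
    have h1 : Measurable fun q : (ℝ × ℝ) × Ω => (t - q.1.1) ^ (α - 1) := by fun_prop
    have h2 : Measurable fun q : (ℝ × ℝ) × Ω => (t - q.1.2) ^ (α - 1) := by fun_prop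
    have h3 : Measurable fun q : (ℝ × ℝ) × Ω => M q.1.1 q.2 :=
      hjm.comp (measurable_fst.fst.prodMk measurable_snd)
    have h4 : Measurable fun q : (ℝ × ℝ) × Ω => M q.1.2 q.2 :=
      hjm.comp (measurable_fst.snd.prodMk measurable_snd)
    exact (h1.mul h3).mul (h2.mul h4)
  refine ⟨hmeas.aestronglyMeasurable, ?_⟩
  rw [hasFiniteIntegral_def,
    MeasureTheory.lintegral_prod _ (hmeas.enorm.aemeasurable)]
  set gE : ℝ → ENNReal := fun s => (‖(t - s) ^ (α - 1)‖₊ : ENNReal) with hgE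
  have hgfin : (∫⁻ s in Set.Ioc (0:ℝ) t, gE s ∂volume) < ⊤ :=
    ((aux_rpow_ii (by linarith) t 0 t).1).2
  have hstep : (∫⁻ p, (∫⁻ ω, ‖((t - p.1) ^ (α - 1) * M p.1 ω) * ((t - p.2) ^ (α - 1) * M p.2 ω)‖₊ ∂P)
        ∂((volume.restrict (Set.Ioc (0:ℝ) t)).prod (volume.restrict (Set.Ioc (0:ℝ) t))))
      ≤ ∫⁻ p, gE p.1 * gE p.2 * ENNReal.ofReal B
        ∂((volume.restrict (Set.Ioc (0:ℝ) t)).prod (volume.restrict (Set.Ioc (0:ℝ) t))) := by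
    rw [Measure.prod_restrict]
    refine lintegral_mono_ae ((ae_restrict_iff' (measurableSet_Ioc.prod measurableSet_Ioc)).2
      (Filter.Eventually.of_forall fun p hp => ?_))
    obtain ⟨hp1, hp2⟩ := hp
    have hre : ∀ ω, ((t - p.1) ^ (α - 1) * M p.1 ω) * ((t - p.2) ^ (α - 1) * M p.2 ω)
        = ((t - p.1) ^ (α - 1) * (t - p.2) ^ (α - 1)) * (M p.1 ω * M p.2 ω) := fun ω => by ring
    have : ∫⁻ ω, ‖((t - p.1) ^ (α - 1) * M p.1 ω) * ((t - p.2) ^ (α - 1) * M p.2 ω)‖₊ ∂P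
        = (gE p.1 * gE p.2) * ∫⁻ ω, ‖M p.1 ω * M p.2 ω‖₊ ∂P := by
      simp_rw [hre, nnnorm_mul, ENNReal.coe_mul]
      have hm : Measurable (fun ω => (‖M p.1 ω‖₊ : ENNReal) * (‖M p.2 ω‖₊ : ENNReal)) :=
        ((hjm.comp measurable_prodMk_left).nnnorm.coe_nnreal_ennreal).mul
          ((hjm.comp measurable_prodMk_left).nnnorm.coe_nnreal_ennreal)
      rw [lintegral_const_mul _ hm]
    rw [this, mul_assoc, mul_assoc]
    exact mul_le_mul_right (mul_le_mul_right (hb p.1 p.2 hp1.1 hp1.2 hp2.1 hp2.2) _) _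
  refine lt_of_le_of_lt hstep ?_
  rw [lintegral_mul_const _ (by fun_prop),
    MeasureTheory.lintegral_prod_mul (by fun_prop) (by fun_prop)]
  exact ENNReal.mul_lt_top (ENNReal.mul_lt_top hgfin hgfin) ENNReal.ofReal_lt_top

end Prob

open MeasureTheory

/-- The Riemann–Liouville fractional integral of a process `M`:
`X^α(t)(ω) = (1/Γ(α)) ∫₀ᵗ (t−s)^{α−1} M(s)(ω) ds`. -/
noncomputable def fracInt {Ω : Type*} (α : ℝ) (M : ℝ → Ω → ℝ) (t : ℝ) (ω : Ω) : ℝ :=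
  (1 / Real.Gamma α) * ∫ s in (0:ℝ)..t, (t - s) ^ (α - 1) * M s ω

set_option maxHeartbeats 2000000 in
/-- mean and variance of the Riemann–Liouville fractional integral of a
process with mean `S·s` and second mixed moment `T·min(s,w) + S²·s·w`. -/
theorem fracInt_mean_var
    {Ω : Type*} [MeasurableSpace Ω] (P : Measure Ω) [IsProbabilityMeasure P]
    (S T α : ℝ) (hS : 0 < S) (hT : 0 < T) (hα : 0 < α)
    (M : ℝ → Ω → ℝ) (hjm : Measurable (Function.uncurry M))
    (hmean : ∀ s : ℝ, 0 ≤ s → ∫ ω, M s ω ∂P = S * s)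
    (hsec : ∀ s w : ℝ, 0 ≤ s → 0 ≤ w →
      ∫ ω, M s ω * M w ω ∂P = T * min s w + S ^ 2 * s * w)
    (hint1 : ∀ t : ℝ, 0 < t →
      Integrable (fun ω => ∫ s in (0:ℝ)..t, (t - s) ^ (α - 1) * |M s ω|) P)
    (hint2 : ∀ t : ℝ, 0 < t →
      Integrable (fun ω => (∫ s in (0:ℝ)..t, (t - s) ^ (α - 1) * |M s ω|) ^ 2) P)
    (t : ℝ) (ht : 0 < t) :
    (∫ ω, fracInt α M t ω ∂P = S * t ^ (α + 1) / Real.Gamma (α + 2)) ∧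
    (∫ ω, (fracInt α M t ω) ^ 2 ∂P - (∫ ω, fracInt α M t ω ∂P) ^ 2 =
      T * t ^ (2 * α + 1) / ((2 * α + 1) * (Real.Gamma (α + 1)) ^ 2)) := by
  have hΓ : 0 < Real.Gamma α := Real.Gamma_pos_of_pos hα
  set c : ℝ := 1 / Real.Gamma α with hc
  -- Fubini for the mean
  have hF1 : Integrable (fun p : ℝ × Ω => (t - p.1) ^ (α - 1) * M p.1 p.2)
      ((volume.restrict (Set.Ioc 0 t)).prod P) :=
    prod_integrable1 hjm hα ht (fun s hs hst => lint_bound1 hjm hT hsec hs hst)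
  have hswap1 : ∫ ω, (∫ s in Set.Ioc (0:ℝ) t, (t - s) ^ (α - 1) * M s ω) ∂P
      = ∫ s in Set.Ioc (0:ℝ) t, (∫ ω, (t - s) ^ (α - 1) * M s ω ∂P) :=
    MeasureTheory.integral_integral_swap
      (f := fun ω s => (t - s) ^ (α - 1) * M s ω) hF1.swap
  have hIω : ∀ ω, fracInt α M t ω
      = c * ∫ s in Set.Ioc (0:ℝ) t, (t - s) ^ (α - 1) * M s ω := by
    intro ω; rw [fracInt, intervalIntegral.integral_of_le ht.le]
  have hEX : ∫ ω, fracInt α M t ω ∂P = c * (S * (t ^ (α + 1) / (α * (α + 1)))) := by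
    calc ∫ ω, fracInt α M t ω ∂P
        = ∫ ω, (c * ∫ s in Set.Ioc (0:ℝ) t, (t - s) ^ (α - 1) * M s ω) ∂P := by
          simp_rw [hIω]
      _ = c * ∫ ω, (∫ s in Set.Ioc (0:ℝ) t, (t - s) ^ (α - 1) * M s ω) ∂P :=
          MeasureTheory.integral_const_mul c _
      _ = c * ∫ s in Set.Ioc (0:ℝ) t, (∫ ω, (t - s) ^ (α - 1) * M s ω ∂P) := by rw [hswap1]
      _ = c * ∫ s in Set.Ioc (0:ℝ) t, S * ((t - s) ^ (α - 1) * s) := by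
          congr 1
          refine setIntegral_congr_fun measurableSet_Ioc (fun s hs => ?_)
          rw [MeasureTheory.integral_const_mul, hmean s hs.1.le]; ring
      _ = c * (S * ∫ s in Set.Ioc (0:ℝ) t, (t - s) ^ (α - 1) * s) := by
          rw [MeasureTheory.integral_const_mul]
      _ = c * (S * (t ^ (α + 1) / (α * (α + 1)))) := by
          rw [← intervalIntegral.integral_of_le ht.le, det_s hα ht]
  have hΓ2 : Real.Gamma (α + 2) = (α + 1) * (α * Real.Gamma α) := by
    rw [(by ring : α + 2 = (α + 1) + 1), Real.Gamma_add_one (by positivity),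
      Real.Gamma_add_one hα.ne']
  have goal1 : ∫ ω, fracInt α M t ω ∂P = S * t ^ (α + 1) / Real.Gamma (α + 2) := by
    rw [hEX, hΓ2, hc]; field_simp
  refine ⟨goal1, ?_⟩
  -- second moment
  have hF2 : Integrable (fun q : (ℝ × ℝ) × Ω =>
      ((t - q.1.1) ^ (α - 1) * M q.1.1 q.2) * ((t - q.1.2) ^ (α - 1) * M q.1.2 q.2))
      (((volume.restrict (Set.Ioc 0 t)).prod (volume.restrict (Set.Ioc 0 t))).prod P) :=
    prod_integrable2 hjm hα ht
      (fun s w hs hst hw hwt => lint_bound2 hjm hT hsec hs hst hw hwt)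
  have hsq : ∀ ω, (∫ s in Set.Ioc (0:ℝ) t, (t - s) ^ (α - 1) * M s ω) ^ 2
      = ∫ s in Set.Ioc (0:ℝ) t, (∫ w in Set.Ioc (0:ℝ) t,
          ((t - s) ^ (α - 1) * M s ω) * ((t - w) ^ (α - 1) * M w ω)) := by
    intro ω
    have e : ∀ s : ℝ, ((t - s) ^ (α - 1) * M s ω)
          * (∫ w in Set.Ioc (0:ℝ) t, (t - w) ^ (α - 1) * M w ω)
        = ∫ w in Set.Ioc (0:ℝ) t,
            ((t - s) ^ (α - 1) * M s ω) * ((t - w) ^ (α - 1) * M w ω) :=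
      fun s => (MeasureTheory.integral_const_mul _ _).symm
    rw [pow_two, ← MeasureTheory.integral_mul_const]
    simp_rw [e]
  have hEX2 : ∫ ω, (fracInt α M t ω) ^ 2 ∂P
      = c ^ 2 * (T * (t ^ (2 * α + 1) / (α ^ 2 * (2 * α + 1)))
          + S ^ 2 * (t ^ (α + 1) / (α * (α + 1))) ^ 2) := by
    calc ∫ ω, (fracInt α M t ω) ^ 2 ∂P
        = c ^ 2 * ∫ ω, (∫ s in Set.Ioc (0:ℝ) t, (t - s) ^ (α - 1) * M s ω) ^ 2 ∂P := by
          simp_rw [hIω, mul_pow]; rw [MeasureTheory.integral_const_mul]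
      _ = c ^ 2 * ∫ ω, (∫ p, ((t - p.1) ^ (α - 1) * M p.1 ω) * ((t - p.2) ^ (α - 1) * M p.2 ω)
            ∂((volume.restrict (Set.Ioc 0 t)).prod (volume.restrict (Set.Ioc 0 t)))) ∂P := by
          congr 1
          refine integral_congr_ae ?_
          filter_upwards [hF2.swap.prod_right_ae] with ω hω
          have hω' : Integrable (fun p : ℝ × ℝ =>
              ((t - p.1) ^ (α - 1) * M p.1 ω) * ((t - p.2) ^ (α - 1) * M p.2 ω))
              ((volume.restrict (Set.Ioc 0 t)).prod (volume.restrict (Set.Ioc 0 t))) := hω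
          rw [hsq ω]
          exact (MeasureTheory.integral_prod _ hω').symm
      _ = c ^ 2 * ∫ p, (∫ ω, ((t - p.1) ^ (α - 1) * M p.1 ω) * ((t - p.2) ^ (α - 1) * M p.2 ω) ∂P)
            ∂((volume.restrict (Set.Ioc 0 t)).prod (volume.restrict (Set.Ioc 0 t))) := by
          congr 1
          exact MeasureTheory.integral_integral_swap
            (f := fun ω (p : ℝ × ℝ) =>
              ((t - p.1) ^ (α - 1) * M p.1 ω) * ((t - p.2) ^ (α - 1) * M p.2 ω)) hF2.swap
      _ = c ^ 2 * ∫ s in Set.Ioc (0:ℝ) t, (∫ w in Set.Ioc (0:ℝ) t,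
            (∫ ω, ((t - s) ^ (α - 1) * M s ω) * ((t - w) ^ (α - 1) * M w ω) ∂P)) := by
          congr 1
          exact MeasureTheory.integral_prod _ hF2.integral_prod_left
      _ = c ^ 2 * ∫ s in Set.Ioc (0:ℝ) t, (∫ w in Set.Ioc (0:ℝ) t,
            ((t - s) ^ (α - 1) * (t - w) ^ (α - 1)) * (T * min s w + S ^ 2 * s * w)) := by
          congr 1
          refine setIntegral_congr_fun measurableSet_Ioc (fun s hs => ?_)
          refine setIntegral_congr_fun measurableSet_Ioc (fun w hw => ?_)
          have e : (fun ω => ((t - s) ^ (α - 1) * M s ω) * ((t - w) ^ (α - 1) * M w ω))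
              = fun ω => ((t - s) ^ (α - 1) * (t - w) ^ (α - 1)) * (M s ω * M w ω) :=
            funext fun ω => by ring
          rw [e, MeasureTheory.integral_const_mul, hsec s w hs.1.le hw.1.le]
      _ = c ^ 2 * ∫ s in Set.Ioc (0:ℝ) t,
            (T * ((t - s) ^ (α - 1) * ((t ^ (α + 1) - (t - s) ^ (α + 1)) / (α * (α + 1))))
              + (S ^ 2 * (t ^ (α + 1) / (α * (α + 1)))) * ((t - s) ^ (α - 1) * s)) := by
          congr 1
          refine setIntegral_congr_fun measurableSet_Ioc (fun s hs => ?_)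
          have ii1 : IntervalIntegrable (fun w => (t - w) ^ (α - 1) * min s w) volume 0 t :=
            (aux_rpow_ii (by linarith) t 0 t).mul_continuousOn
              ((continuous_const.min continuous_id).continuousOn)
          have ii2 : IntervalIntegrable (fun w => (t - w) ^ (α - 1) * w) volume 0 t :=
            (aux_rpow_ii (by linarith) t 0 t).mul_continuousOn continuous_id.continuousOn
          have e : (fun w => ((t - s) ^ (α - 1) * (t - w) ^ (α - 1))
                * (T * min s w + S ^ 2 * s * w))
              = fun w => (T * (t - s) ^ (α - 1)) * ((t - w) ^ (α - 1) * min s w)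
                + ((S ^ 2 * s) * (t - s) ^ (α - 1)) * ((t - w) ^ (α - 1) * w) :=
            funext fun w => by ring
          rw [← intervalIntegral.integral_of_le ht.le, e,
            intervalIntegral.integral_add (ii1.const_mul _) (ii2.const_mul _),
            intervalIntegral.integral_const_mul, intervalIntegral.integral_const_mul,
            det_min hα ht hs.1 hs.2, det_s hα ht]
          ring
      _ = c ^ 2 * (T * (t ^ (2 * α + 1) / (α ^ 2 * (2 * α + 1)))
          + S ^ 2 * (t ^ (α + 1) / (α * (α + 1))) ^ 2) := by
          congr 1
          have iiA : IntervalIntegrable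
              (fun s => (t - s) ^ (α - 1) * ((t ^ (α + 1) - (t - s) ^ (α + 1)) / (α * (α + 1))))
              volume 0 t := by
            refine (aux_rpow_ii (by linarith) t 0 t).mul_continuousOn
              (Continuous.continuousOn ?_)
            have : Continuous fun s : ℝ => (t - s) ^ (α + 1) :=
              (Real.continuous_rpow_const (by positivity)).comp (continuous_const.sub continuous_id)
            continuity
          have iiB : IntervalIntegrable (fun s => (t - s) ^ (α - 1) * s) volume 0 t :=
            (aux_rpow_ii (by linarith) t 0 t).mul_continuousOn continuous_id.continuousOn
          rw [← intervalIntegral.integral_of_le ht.le,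
            intervalIntegral.integral_add (iiA.const_mul _) (iiB.const_mul _),
            intervalIntegral.integral_const_mul, intervalIntegral.integral_const_mul,
            det_KT hα ht, det_s hα ht]
          ring
  have hΓ1 : Real.Gamma (α + 1) = α * Real.Gamma α := Real.Gamma_add_one hα.ne'
  rw [hEX2, hEX, hΓ1, hc]
  have h2α : (0:ℝ) < 2 * α + 1 := by linarith
  field_simp
  ring
end
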